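/- arXiv:1509.00229 — 3 statements merged into one kernel-verified Lean document; each statement's English description precedes it below -/
import Mathlib

section
/- Let Ω = ℝ^d/ℤ^d, let h : Ω → ℝ be continuous with ĥ(ξ) ≠ 0 for all ξ ∈ ℤ^d, and let (μ_N) be a sequence of finite signed Borel measures on Ω with ‖μ_N‖_TV ≤ M < +∞ for all N. Then lim_{N→∞} N_h(μ_N) = 0 if and only if (μ_N) converges weakly to 0, i.e. ∫_Ω f dμ_N → 0 for every continuous f : Ω → ℝ. -/
open MeasureTheory Filter Topology
open scoped NNReal ENNReal

noncomputable section

/-- The `d`-dimensional torus `Ω = ℝ^d/ℤ^d`. -/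
abbrev Torus (d : ℕ) : Type := Fin d → AddCircle (1 : ℝ)

/-- Convolution `(h ⋆ μ)(x) = ∫ h(x−y) dμ(y)` of a function with a finite signed
measure, via the Jordan decomposition of `μ`. -/
def convSigned {d : ℕ} (h : Torus d → ℝ) (μ : SignedMeasure (Torus d)) (x : Torus d) : ℝ :=
  ∫ y, h (x - y) ∂μ.toJordanDecomposition.posPart -
    ∫ y, h (x - y) ∂μ.toJordanDecomposition.negPart

/-- `N_h(μ) = ‖h ⋆ μ‖_{L²(Ω)}` for a signed measure `μ`. -/
def nhSigned {d : ℕ} (h : Torus d → ℝ) (μ : SignedMeasure (Torus d)) : ℝ :=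
  Real.sqrt (∫ x, (convSigned h μ x) ^ 2)

/-- The total variation norm `‖μ‖_TV` of a signed measure. -/
def tvNorm {d : ℕ} (μ : SignedMeasure (Torus d)) : ℝ := (μ.totalVariation Set.univ).toReal

/-- The integral `∫ f dμ` of a function against a signed measure. -/
def signedIntegral {d : ℕ} (μ : SignedMeasure (Torus d)) (f : Torus d → ℝ) : ℝ :=
  ∫ y, f y ∂μ.toJordanDecomposition.posPart - ∫ y, f y ∂μ.toJordanDecomposition.negPart

/-- The Fourier coefficient `ĥ(ξ) = ∫_Ω e^{−2πi⟨ξ,x⟩} h(x) dx`, `ξ ∈ ℤ^d`. -/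
def torusFourierCoeff {d : ℕ} (h : Torus d → ℝ) (ξ : Fin d → ℤ) : ℂ :=
  ∫ x : Torus d, (∏ i, fourier (-(ξ i)) (x i)) * (h x : ℂ)

/-- `(h ⋆ (μ − ν))(x)` for two (finite) measures `μ, ν`. -/
def convDiff {d : ℕ} (h : Torus d → ℝ) (μ ν : Measure (Torus d)) (x : Torus d) : ℝ :=
  ∫ y, h (x - y) ∂μ - ∫ y, h (x - y) ∂ν

/-- `N_h(μ − ν) = ‖h ⋆ (μ − ν)‖_{L²(Ω)}`. -/
def nhDist {d : ℕ} (h : Torus d → ℝ) (μ ν : Measure (Torus d)) : ℝ :=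
  Real.sqrt (∫ x, (convDiff h μ ν x) ^ 2)

/-- The L¹ Wasserstein (Kantorovich) distance: infimum of `∫ dist(x,y) dc` over
all couplings `c` of `μ` and `ν`. -/
def W1 {d : ℕ} (μ ν : Measure (Torus d)) : ℝ :=
  sInf { r | ∃ c : Measure (Torus d × Torus d),
    c.map Prod.fst = μ ∧ c.map Prod.snd = ν ∧ r = ∫ p, dist p.1 p.2 ∂c }

/-- The set `𝓜(Ω^N)` of `N`-point measures `(1/N) ∑ δ_{p_i}`. -/
def nPointMeasures (d N : ℕ) : Set (Measure (Torus d)) :=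
  { μ | ∃ p : Fin N → Torus d, μ = (N : ℝ≥0∞)⁻¹ • ∑ i, Measure.dirac (p i) }

/-- Hausdorff distance between two sets of measures with respect to the metric
`(μ, ν) ↦ N_h(μ − ν)`. -/
def hausNh {d : ℕ} (h : Torus d → ℝ) (A B : Set (Measure (Torus d))) : ℝ :=
  max (sSup ((fun μ => sInf ((fun ν => nhDist h μ ν) '' B)) '' A))
      (sSup ((fun ν => sInf ((fun μ => nhDist h μ ν) '' A)) '' B))

/-! ### Auxiliary material -/

namespace NhAux

variable {d : ℕ}

instance : IsProbabilityMeasure (volume : Measure (AddCircle (1 : ℝ))) :=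
  ⟨by rw [AddCircle.measure_univ]; norm_num⟩

instance : IsProbabilityMeasure (volume : Measure (Torus d)) := by infer_instance

/-- Characters of the torus. -/
def tchar (ξ : Fin d → ℤ) : C(Torus d, ℂ) :=
  ⟨fun x => ∏ i, fourier (ξ i) (x i), by
    exact continuous_finset_prod _ fun i _ =>
      (fourier (ξ i)).continuous.comp (continuous_apply i)⟩

lemma tchar_apply (ξ : Fin d → ℤ) (x : Torus d) :
    tchar ξ x = ∏ i, fourier (ξ i) (x i) := rfl

lemma norm_tchar (ξ : Fin d → ℤ) (x : Torus d) : ‖tchar ξ x‖ = 1 := by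
  rw [tchar_apply, norm_prod]
  refine Finset.prod_eq_one fun i _ => ?_
  rw [fourier_apply, Circle.norm_coe]

lemma tchar_add_arg (ξ : Fin d → ℤ) (x y : Torus d) :
    tchar ξ (x + y) = tchar ξ x * tchar ξ y := by
  simp only [tchar_apply, ← Finset.prod_mul_distrib]
  refine Finset.prod_congr rfl fun i _ => ?_
  simp only [Pi.add_apply, fourier_apply, smul_add, AddCircle.toCircle_add, Circle.coe_mul]

lemma tchar_zero : tchar (0 : Fin d → ℤ) = 1 := by
  ext x
  simp [tchar_apply, fourier_zero]

lemma tchar_mul (ξ η : Fin d → ℤ) : tchar ξ * tchar η = tchar (ξ + η) := by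
  ext x
  simp only [ContinuousMap.mul_apply, tchar_apply, ← Finset.prod_mul_distrib]
  refine Finset.prod_congr rfl fun i _ => ?_
  rw [Pi.add_apply, fourier_add]

lemma star_tchar (ξ : Fin d → ℤ) : star (tchar ξ) = tchar (-ξ) := by
  ext x
  simp only [ContinuousMap.star_apply, tchar_apply, star_prod]
  refine Finset.prod_congr rfl fun i _ => ?_
  rw [Pi.neg_apply, fourier_neg]
  rfl

/-- Integral of a continuous map against a finite measure is well-defined. -/
lemma cm_integrable {E : Type*} [NormedAddCommGroup E] [NormedSpace ℝ E]
    (g : C(Torus d, E)) (ν : Measure (Torus d)) [IsFiniteMeasure ν] :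
    Integrable (⇑g) ν :=
  g.continuous.integrable_of_hasCompactSupport (HasCompactSupport.of_compactSpace _)

lemma tvNorm_eq (μ : SignedMeasure (Torus d)) :
    tvNorm μ = (μ.toJordanDecomposition.posPart Set.univ).toReal +
      (μ.toJordanDecomposition.negPart Set.univ).toReal := by
  rw [tvNorm, SignedMeasure.totalVariation, Measure.add_apply, ENNReal.toReal_add
    (measure_ne_top _ _) (measure_ne_top _ _)]

lemma tvNorm_nonneg (μ : SignedMeasure (Torus d)) : 0 ≤ tvNorm μ :=
  ENNReal.toReal_nonneg

/-- Generic bound for Jordan-type integrals. -/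
lemma jordan_bound {E : Type*} [NormedAddCommGroup E] [NormedSpace ℝ E]
    (μ : SignedMeasure (Torus d)) (g : C(Torus d, E)) :
    ‖(∫ y, g y ∂μ.toJordanDecomposition.posPart) -
      ∫ y, g y ∂μ.toJordanDecomposition.negPart‖ ≤ ‖g‖ * tvNorm μ := by
  rw [tvNorm_eq, mul_add]
  refine (norm_sub_le _ _).trans (add_le_add ?_ ?_) <;>
    exact norm_integral_le_of_norm_le_const (Eventually.of_forall fun x => g.norm_coe_le_norm x)

/-- Complex integral against a signed measure. -/
def Icx (μ : SignedMeasure (Torus d)) (g : Torus d → ℂ) : ℂ :=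
  ∫ y, g y ∂μ.toJordanDecomposition.posPart - ∫ y, g y ∂μ.toJordanDecomposition.negPart

lemma Icx_bound (μ : SignedMeasure (Torus d)) (g : C(Torus d, ℂ)) :
    ‖Icx μ g‖ ≤ ‖g‖ * tvNorm μ := jordan_bound μ g

lemma Icx_add (μ : SignedMeasure (Torus d)) (g₁ g₂ : C(Torus d, ℂ)) :
    Icx μ ⇑(g₁ + g₂) = Icx μ g₁ + Icx μ g₂ := by
  simp only [Icx, ContinuousMap.coe_add, Pi.add_apply,
    integral_add (cm_integrable g₁ _) (cm_integrable g₂ _)]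
  ring

lemma Icx_smul (μ : SignedMeasure (Torus d)) (c : ℂ) (g : C(Torus d, ℂ)) :
    Icx μ ⇑(c • g) = c • Icx μ g := by
  simp only [Icx, ContinuousMap.coe_smul, Pi.smul_apply, integral_smul, smul_sub]

lemma integral_cx_ofReal {α : Type*} [MeasurableSpace α] (ν : Measure α) (f : α → ℝ) :
    ∫ x, ((f x : ℝ) : ℂ) ∂ν = ((∫ x, f x ∂ν : ℝ) : ℂ) :=
  integral_ofReal

lemma Icx_ofReal (μ : SignedMeasure (Torus d)) (f : Torus d → ℝ) :
    Icx μ (fun y => (f y : ℂ)) = ((signedIntegral μ f : ℝ) : ℂ) := by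
  rw [Icx, signedIntegral, integral_cx_ofReal, integral_cx_ofReal, Complex.ofReal_sub]

/-- Continuity of the convolution `x ↦ ∫ h(x-y) dν`. -/
lemma conv_continuous (h : C(Torus d, ℝ)) (ν : Measure (Torus d)) [IsFiniteMeasure ν] :
    Continuous fun x : Torus d => ∫ y, h (x - y) ∂ν := by
  rw [continuous_iff_continuousAt]
  intro x
  refine tendsto_integral_filter_of_dominated_convergence (fun _ => ‖h‖)
    (Eventually.of_forall fun x' =>
      (h.continuous.comp (continuous_const.sub continuous_id)).aestronglyMeasurable)
    (Eventually.of_forall fun x' =>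
      Eventually.of_forall fun y => h.norm_coe_le_norm _)
    (integrable_const _) (Eventually.of_forall fun y => ?_)
  exact ((h.continuous.comp (continuous_id.sub continuous_const)).tendsto x)

lemma convSigned_continuous (h : C(Torus d, ℝ)) (μ : SignedMeasure (Torus d)) :
    Continuous (convSigned (⇑h) μ) :=
  (conv_continuous h _).sub (conv_continuous h _)

/-- `convSigned` is a signed integral of a translate. -/
lemma convSigned_eq (h : C(Torus d, ℝ)) (μ : SignedMeasure (Torus d)) (x : Torus d) :
    convSigned (⇑h) μ x = signedIntegral μ (fun y => h (x - y)) := rfl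

lemma convSigned_bound (h : C(Torus d, ℝ)) (μ : SignedMeasure (Torus d)) (x : Torus d) :
    |convSigned (⇑h) μ x| ≤ ‖h‖ * tvNorm μ := by
  rw [convSigned_eq]
  have := jordan_bound (E := ℝ) μ (h.comp ⟨fun y => x - y, continuous_const.sub continuous_id⟩)
  rw [Real.norm_eq_abs] at this
  refine le_trans (le_of_eq ?_) (this.trans ?_)
  · rfl
  · gcongr
    · exact tvNorm_nonneg μ
    · refine (ContinuousMap.norm_le _ (norm_nonneg h)).2 fun y => h.norm_coe_le_norm _

/-- Fourier transform of a convolution with a positive measure. -/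
lemma conv_fourier (h : C(Torus d, ℝ)) (ν : Measure (Torus d)) [IsFiniteMeasure ν]
    (ξ : Fin d → ℤ) :
    (∫ x : Torus d, tchar ξ x * ((∫ y, h (x - y) ∂ν : ℝ) : ℂ)) =
      (∫ z : Torus d, tchar ξ z * (h z : ℂ)) * ∫ y, tchar ξ y ∂ν := by
  have hint : Integrable (Function.uncurry fun x y : Torus d => tchar ξ x * ((h (x - y) : ℝ) : ℂ))
      ((volume : Measure (Torus d)).prod ν) := by
    refine Continuous.integrable_of_hasCompactSupport ?_ (HasCompactSupport.of_compactSpace _)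
    exact ((tchar ξ).continuous.comp continuous_fst).mul
      (Complex.continuous_ofReal.comp (h.continuous.comp (continuous_fst.sub continuous_snd)))
  calc (∫ x : Torus d, tchar ξ x * ((∫ y, h (x - y) ∂ν : ℝ) : ℂ))
      = ∫ x : Torus d, ∫ y, tchar ξ x * ((h (x - y) : ℝ) : ℂ) ∂ν := by
        refine integral_congr_ae (Eventually.of_forall fun x => ?_)
        dsimp only
        rw [← integral_cx_ofReal, integral_const_mul]
    _ = ∫ y, (∫ x : Torus d, tchar ξ x * ((h (x - y) : ℝ) : ℂ)) ∂ν :=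
        integral_integral_swap hint
    _ = ∫ y, (tchar ξ y * ∫ z : Torus d, tchar ξ z * (h z : ℂ)) ∂ν := by
        refine integral_congr_ae (Eventually.of_forall fun y => ?_)
        dsimp only
        have hsub := integral_add_right_eq_self (μ := (volume : Measure (Torus d)))
          (fun x => tchar ξ x * ((h (x - y) : ℝ) : ℂ)) y
        rw [← hsub]
        simp only [add_sub_cancel_right, tchar_add_arg]
        rw [← integral_const_mul]
        refine integral_congr_ae (Eventually.of_forall fun z => ?_)
        ring
    _ = ∫ y, ((∫ z : Torus d, tchar ξ z * (h z : ℂ)) * tchar ξ y) ∂ν :=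
        integral_congr_ae (Eventually.of_forall fun y => mul_comm _ _)
    _ = (∫ z : Torus d, tchar ξ z * (h z : ℂ)) * ∫ y, tchar ξ y ∂ν :=
        integral_const_mul _ _

/-- Fourier transform of the signed convolution. -/
lemma convSigned_fourier (h : C(Torus d, ℝ)) (μ : SignedMeasure (Torus d)) (ξ : Fin d → ℤ) :
    (∫ x : Torus d, tchar ξ x * ((convSigned (⇑h) μ x : ℝ) : ℂ)) =
      (∫ z : Torus d, tchar ξ z * (h z : ℂ)) * Icx μ (tchar ξ) := by
  have hpos : Integrable (fun x : Torus d =>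
      tchar ξ x * ((∫ y, h (x - y) ∂μ.toJordanDecomposition.posPart : ℝ) : ℂ)) volume := by
    refine Continuous.integrable_of_hasCompactSupport ?_ (HasCompactSupport.of_compactSpace _)
    exact (tchar ξ).continuous.mul (Complex.continuous_ofReal.comp (conv_continuous h _))
  have hneg : Integrable (fun x : Torus d =>
      tchar ξ x * ((∫ y, h (x - y) ∂μ.toJordanDecomposition.negPart : ℝ) : ℂ)) volume := by
    refine Continuous.integrable_of_hasCompactSupport ?_ (HasCompactSupport.of_compactSpace _)
    exact (tchar ξ).continuous.mul (Complex.continuous_ofReal.comp (conv_continuous h _))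
  have : (∫ x : Torus d, tchar ξ x * ((convSigned (⇑h) μ x : ℝ) : ℂ)) =
      (∫ x : Torus d, tchar ξ x * ((∫ y, h (x - y) ∂μ.toJordanDecomposition.posPart : ℝ) : ℂ)) -
      ∫ x : Torus d, tchar ξ x * ((∫ y, h (x - y) ∂μ.toJordanDecomposition.negPart : ℝ) : ℂ) := by
    rw [← integral_sub hpos hneg]
    refine integral_congr_ae (Eventually.of_forall fun x => ?_)
    simp only [convSigned, Complex.ofReal_sub]
    ring
  rw [this, conv_fourier, conv_fourier, Icx, mul_sub]

/-- Cauchy–Schwarz-type bound: `|∫ χ F| ≤ √(∫ F²)` on a probability space. -/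
lemma char_cauchy_schwarz (ξ : Fin d → ℤ) {F : Torus d → ℝ} (hF : Continuous F) :
    ‖∫ x : Torus d, tchar ξ x * ((F x : ℝ) : ℂ)‖ ≤ Real.sqrt (∫ x : Torus d, F x ^ 2) := by
  have habs : (∫ x : Torus d, |F x|) ≤ Real.sqrt (∫ x : Torus d, F x ^ 2) := by
    have hmem : MemLp (fun x : Torus d => |F x|) (ENNReal.ofReal 2) volume := by
      refine Continuous.memLp_of_hasCompactSupport (hF.abs) (HasCompactSupport.of_compactSpace _)
    have hone : MemLp (fun _ : Torus d => (1 : ℝ)) (ENNReal.ofReal 2) volume :=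
      memLp_const 1
    have hpq : (2 : ℝ).HolderConjugate 2 := Real.HolderConjugate.two_two
    have := integral_mul_le_Lp_mul_Lq_of_nonneg hpq
      (Eventually.of_forall fun x => abs_nonneg (F x))
      (Eventually.of_forall fun _ => zero_le_one) hmem hone
    have h2 : ∀ x : Torus d, |F x| ^ (2 : ℝ) = F x ^ 2 := fun x => by
      rw [show (2 : ℝ) = ((2 : ℕ) : ℝ) by norm_num, Real.rpow_natCast, sq_abs]
    simp only [mul_one, Real.one_rpow, h2, integral_const, measure_univ,
      ENNReal.toReal_one, smul_eq_mul, one_mul, probReal_univ, Real.one_rpow] at this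
    rw [Real.sqrt_eq_rpow]
    exact this
  refine (norm_integral_le_integral_norm _).trans ?_
  refine le_trans (le_of_eq ?_) habs
  refine integral_congr_ae (Eventually.of_forall fun x => ?_)
  dsimp only
  rw [norm_mul, norm_tchar, one_mul, Complex.norm_real, Real.norm_eq_abs]

lemma integral_tchar_mul_eq_fourierCoeff (h : C(Torus d, ℝ)) (ξ : Fin d → ℤ) :
    (∫ z : Torus d, tchar ξ z * (h z : ℂ)) = torusFourierCoeff (⇑h) (-ξ) := by
  rw [torusFourierCoeff]
  refine integral_congr_ae (Eventually.of_forall fun z => ?_)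
  dsimp only
  rw [tchar_apply]
  congr 1
  exact Finset.prod_congr rfl fun i _ => by rw [Pi.neg_apply, neg_neg]

end NhAux

open NhAux

/-- For `h` continuous with nonvanishing Fourier coefficients and a
TV-bounded sequence of signed measures `μ_N`, `N_h(μ_N) → 0` iff `μ_N ⇀ 0` weakly. -/
theorem nh_tendsto_zero_iff_weak_tendsto_zero {d : ℕ} (h : C(Torus d, ℝ))
    (hfc : ∀ ξ : Fin d → ℤ, torusFourierCoeff (⇑h) ξ ≠ 0)
    (μ : ℕ → SignedMeasure (Torus d)) (M : ℝ) (hM : ∀ N, tvNorm (μ N) ≤ M) :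
    Tendsto (fun N => nhSigned (⇑h) (μ N)) atTop (𝓝 0) ↔
      ∀ f : C(Torus d, ℝ), Tendsto (fun N => signedIntegral (μ N) (⇑f)) atTop (𝓝 0) := by
  have hM0 : (0 : ℝ) ≤ M := (tvNorm_nonneg (μ 0)).trans (hM 0)
  constructor
  · -- Forward direction
    intro hnh f
    -- Step 1: characters
    have hchar : ∀ ξ : Fin d → ℤ, Tendsto (fun N => Icx (μ N) (tchar ξ)) atTop (𝓝 0) := by
      intro ξ
      set c : ℂ := ∫ z : Torus d, tchar ξ z * (h z : ℂ) with hc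
      have hc0 : c ≠ 0 := by
        rw [hc, integral_tchar_mul_eq_fourierCoeff]
        exact hfc (-ξ)
      have hcpos : 0 < ‖c‖ := norm_pos_iff.mpr hc0
      have key : ∀ N, ‖Icx (μ N) (tchar ξ)‖ ≤ nhSigned (⇑h) (μ N) / ‖c‖ := by
        intro N
        have h1 : (∫ x : Torus d, tchar ξ x * ((convSigned (⇑h) (μ N) x : ℝ) : ℂ)) =
            c * Icx (μ N) (tchar ξ) := convSigned_fourier h (μ N) ξ
        have h2 : ‖c * Icx (μ N) (tchar ξ)‖ ≤ nhSigned (⇑h) (μ N) := by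
          rw [← h1, nhSigned]
          exact char_cauchy_schwarz ξ (convSigned_continuous h (μ N))
        rw [norm_mul] at h2
        rw [le_div_iff₀ hcpos, mul_comm]
        exact h2
      rw [tendsto_zero_iff_norm_tendsto_zero]
      refine squeeze_zero (fun N => norm_nonneg _) key ?_
      simpa using hnh.div_const ‖c‖
    -- Step 2: the set of test functions with tendsto property
    have hspan : ∀ g : C(Torus d, ℂ), g ∈ Submodule.span ℂ (Set.range (tchar (d := d))) →
        Tendsto (fun N => Icx (μ N) g) atTop (𝓝 0) := by
      intro g hg
      refine Submodule.span_induction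
        (p := fun (g : C(Torus d, ℂ)) _ => Tendsto (fun N => Icx (μ N) ⇑g) atTop (𝓝 0)) ?_ ?_ ?_ ?_ hg
      · rintro _ ⟨ξ, rfl⟩; exact hchar ξ
      · simpa [Icx] using tendsto_const_nhds
      · intro a b _ _ ha hb
        have heq : (fun N => Icx (μ N) ⇑(a + b)) = fun N => Icx (μ N) a + Icx (μ N) b := by
          funext N; exact Icx_add (μ N) a b
        rw [heq]
        simpa using ha.add hb
      · intro c a _ ha
        have heq : (fun N => Icx (μ N) ⇑(c • a)) = fun N => c • Icx (μ N) a := by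
          funext N; exact Icx_smul (μ N) c a
        rw [heq]
        simpa using ha.const_smul c
    -- Step 3: density via Stone–Weierstrass
    have hdense : ∀ (g : C(Torus d, ℂ)) (ε : ℝ), 0 < ε →
        ∃ p ∈ Submodule.span ℂ (Set.range (tchar (d := d))), ‖g - p‖ < ε := by
      intro g ε hε
      -- Submonoid of characters
      let S : Submonoid C(Torus d, ℂ) :=
        { carrier := Set.range (tchar (d := d))
          one_mem' := ⟨0, tchar_zero.symm ▸ rfl⟩
          mul_mem' := by rintro _ _ ⟨ξ, rfl⟩ ⟨η, rfl⟩; exact ⟨ξ + η, (tchar_mul ξ η).symm⟩ }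
      have hstar : star (Set.range (tchar (d := d))) = Set.range (tchar (d := d)) := by
        ext a
        simp only [Set.mem_star]
        constructor
        · rintro ⟨ξ, hξ⟩
          refine ⟨-ξ, ?_⟩
          have : a = star (tchar ξ) := by rw [hξ]; exact (star_star a).symm
          rw [this, star_tchar]
        · rintro ⟨ξ, rfl⟩; exact ⟨-ξ, (star_tchar ξ).symm⟩
      let A : StarSubalgebra ℂ C(Torus d, ℂ) := StarAlgebra.adjoin ℂ (Set.range (tchar (d := d)))
      have hsep : A.SeparatesPoints := by
        intro x y hxy
        obtain ⟨i, hi⟩ := Function.ne_iff.mp hxy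
        refine ⟨_, ⟨tchar (Pi.single i 1), StarAlgebra.subset_adjoin ℂ _ ⟨_, rfl⟩, rfl⟩, ?_⟩
        have heval : ∀ z : Torus d, tchar (Pi.single i 1) z = ((z i).toCircle : ℂ) := by
          intro z
          rw [tchar_apply]
          rw [Finset.prod_eq_single i]
          · rw [Pi.single_eq_same, fourier_apply, one_zsmul]
          · intro j _ hj
            rw [Pi.single_eq_of_ne hj, fourier_zero]
          · intro hmem; exact absurd (Finset.mem_univ i) hmem
        dsimp only
        rw [heval, heval]
        intro hco
        exact hi (AddCircle.injective_toCircle one_ne_zero (Circle.coe_injective hco))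
      have htop : A.topologicalClosure = ⊤ :=
        ContinuousMap.starSubalgebra_topologicalClosure_eq_top_of_separatesPoints A hsep
      have hmem : g ∈ closure (A : Set C(Torus d, ℂ)) := by
        have : g ∈ A.topologicalClosure := htop ▸ trivial
        exact this
      obtain ⟨p, hpA, hpd⟩ := Metric.mem_closure_iff.mp hmem ε hε
      refine ⟨p, ?_, by rwa [← dist_eq_norm]⟩
      -- Convert A-membership into span membership
      have hAS : A.toSubalgebra = Algebra.adjoin ℂ (Set.range (tchar (d := d))) := by
        rw [StarAlgebra.adjoin_toSubalgebra, hstar, Set.union_self]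
      have hpA' : p ∈ Algebra.adjoin ℂ (Set.range (tchar (d := d))) := by
        rw [← hAS]; exact hpA
      have hspan_eq : Subalgebra.toSubmodule (Algebra.adjoin ℂ (Set.range (tchar (d := d)))) =
          Submodule.span ℂ (Set.range (tchar (d := d))) := by
        rw [Algebra.adjoin_eq_span]
        congr 1
        rw [show Set.range (tchar (d := d)) = (S : Set C(Torus d, ℂ)) from rfl,
          Submonoid.closure_eq]
      have : p ∈ Subalgebra.toSubmodule (Algebra.adjoin ℂ (Set.range (tchar (d := d)))) := hpA'
      rw [hspan_eq] at this
      exact this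
    -- Step 4: assemble
    let fc : C(Torus d, ℂ) := ⟨fun x => ((f x : ℝ) : ℂ), Complex.continuous_ofReal.comp f.continuous⟩
    have hfc_tendsto : Tendsto (fun N => Icx (μ N) fc) atTop (𝓝 0) := by
      rw [NormedAddCommGroup.tendsto_nhds_zero]
      intro ε hε
      set δ : ℝ := ε / (2 * (M + 1)) with hδ
      have hδpos : 0 < δ := by positivity
      obtain ⟨p, hp_span, hp_close⟩ := hdense fc δ hδpos
      have hp_tendsto := hspan p hp_span
      have hev : ∀ᶠ N in atTop, ‖Icx (μ N) p‖ < ε / 2 := by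
        have := (NormedAddCommGroup.tendsto_nhds_zero.mp hp_tendsto) (ε / 2) (by positivity)
        exact this
      filter_upwards [hev] with N hN
      have hsplit : Icx (μ N) fc = Icx (μ N) (fc - p) + Icx (μ N) p := by
        have := Icx_add (μ N) (fc - p) p
        rw [sub_add_cancel] at this
        exact this
      have hbound : ‖Icx (μ N) (fc - p)‖ ≤ ε / 2 := by
        refine (Icx_bound (μ N) (fc - p)).trans ?_
        have h1 : ‖fc - p‖ * tvNorm (μ N) ≤ δ * (M + 1) := by
          refine mul_le_mul hp_close.le ((hM N).trans (by linarith)) (tvNorm_nonneg _) hδpos.le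
        have h2 : δ * (M + 1) = ε / 2 := by
          rw [hδ]; field_simp
        linarith
      calc ‖Icx (μ N) fc‖ = ‖Icx (μ N) (fc - p) + Icx (μ N) p‖ := by rw [hsplit]
        _ ≤ ‖Icx (μ N) (fc - p)‖ + ‖Icx (μ N) p‖ := norm_add_le _ _
        _ < ε / 2 + ε / 2 := by linarith
        _ = ε := by ring
    have heq : ∀ N, signedIntegral (μ N) (⇑f) = (Icx (μ N) fc).re := by
      intro N
      rw [show Icx (μ N) ⇑fc = Icx (μ N) (fun y => ((f y : ℝ) : ℂ)) from rfl, Icx_ofReal]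
      simp
    have : Tendsto (fun N => (Icx (μ N) fc).re) atTop (𝓝 0) := by
      have := (Complex.continuous_re.tendsto 0).comp hfc_tendsto
      simpa [Function.comp_def] using this
    simpa only [heq] using this
  · -- Backward direction
    intro hw
    have hptwise : ∀ x : Torus d,
        Tendsto (fun N => convSigned (⇑h) (μ N) x) atTop (𝓝 0) := by
      intro x
      have := hw (h.comp ⟨fun y => x - y, continuous_const.sub continuous_id⟩)
      simp only [convSigned_eq]; exact this
    have hint : Tendsto (fun N => ∫ x : Torus d, (convSigned (⇑h) (μ N) x) ^ 2) atTop (𝓝 0) := by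
      have h0 : (0 : ℝ) = ∫ _ : Torus d, (0 : ℝ) := by simp
      rw [h0]
      refine tendsto_integral_of_dominated_convergence (fun _ => (‖h‖ * M) ^ 2)
        (fun N => ((convSigned_continuous h (μ N)).pow 2).aestronglyMeasurable)
        (integrable_const _) (fun N => Eventually.of_forall fun x => ?_)
        (Eventually.of_forall fun x => ?_)
      · have h1 : |convSigned (⇑h) (μ N) x| ≤ ‖h‖ * M := by
          refine (convSigned_bound h (μ N) x).trans ?_
          exact mul_le_mul_of_nonneg_left (hM N) (norm_nonneg h)
        rw [Real.norm_eq_abs, abs_pow]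
        exact pow_le_pow_left₀ (abs_nonneg _) h1 2
      · have := (hptwise x).pow 2
        simpa using this
    have hsqrt := ((Real.continuous_sqrt.tendsto 0).comp hint)
    simp only [Function.comp_def, Real.sqrt_zero] at hsqrt
    exact hsqrt
end
end

section
/- Let Ω = ℝ^d/ℤ^d, let h : Ω → ℝ be L-Lipschitz, and let N ≥ 2^d be an integer. Then sup_{π∈M_Δ} inf_{μ∈𝓜(Ω^N)} N_h(μ − π) ≤ L(√d/2 + 1)/(N^{1/d} − 1), where 𝓜(Ω^N) is the set of N-point measures on Ω. -/
open MeasureTheory Filter Topology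
open scoped NNReal ENNReal

noncomputable section

/- ========== auxiliary defs/lemmas for the proof ========== -/

/- ===================== auxiliary material ===================== -/

instance NhAux_fact01 : Fact ((0:ℝ) < 1) := ⟨one_pos⟩

namespace NhAux

/-- probability measure on the circle -/
instance : IsProbabilityMeasure (volume : Measure (AddCircle (1:ℝ))) :=
  ⟨by rw [AddCircle.measure_univ]; norm_num⟩

lemma sum_digits_lt (n : ℕ) (f : ℕ → ℕ) (j : ℕ) (hf : ∀ i < j, f i < n) (hn : 1 ≤ n) :
    (∑ i ∈ Finset.range j, f i * n ^ i) + 1 ≤ n ^ j := by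
  induction j with
  | zero => simp
  | succ j ih =>
    have h1 := ih (fun i hi => hf i (hi.trans (Nat.lt_succ_self j)))
    have h2 : f j * n ^ j ≤ (n - 1) * n ^ j :=
      Nat.mul_le_mul_right _ (Nat.le_sub_one_of_lt (hf j (Nat.lt_succ_self j)))
    rw [Finset.sum_range_succ]
    calc (∑ i ∈ Finset.range j, f i * n ^ i) + f j * n ^ j + 1
        ≤ n ^ j + (n - 1) * n ^ j := by omega
      _ = n ^ (j + 1) := by
          have : n ^ j + (n - 1) * n ^ j = (1 + (n-1)) * n ^ j := by ring
          rw [this, Nat.add_sub_cancel' hn, pow_succ, Nat.mul_comm]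

lemma digit_recover (n : ℕ) (hn : 1 ≤ n) (f : ℕ → ℕ) (d : ℕ) (hf : ∀ i < d, f i < n)
    {j : ℕ} (hj : j < d) :
    (∑ i ∈ Finset.range d, f i * n ^ i) / n ^ j % n = f j := by
  have hpow : 0 < n ^ j := Nat.pow_pos hn
  set B : ℕ := ∑ i ∈ Finset.Ico (j+1) d, f i * n ^ (i - (j+1)) with hB
  have hsplit : (∑ i ∈ Finset.range d, f i * n ^ i)
      = (∑ i ∈ Finset.range j, f i * n ^ i) + n ^ j * (f j + n * B) := by
    rw [← Finset.sum_range_add_sum_Ico _ (Nat.succ_le_of_lt hj), Finset.sum_range_succ]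
    have : ∑ i ∈ Finset.Ico (j+1) d, f i * n ^ i = n ^ (j+1) * B := by
      rw [hB, Finset.mul_sum]
      refine Finset.sum_congr rfl (fun i hi => ?_)
      have hi' : j + 1 ≤ i := (Finset.mem_Ico.mp hi).1
      rw [← mul_assoc, mul_comm (n ^ (j+1)) (f i), mul_assoc, ← pow_add,
        Nat.add_sub_cancel' hi']
    rw [this]; ring_nf
    ring
  have hA : (∑ i ∈ Finset.range j, f i * n ^ i) < n ^ j := by
    have := sum_digits_lt n f j (fun i hi => hf i (hi.trans hj)) hn
    omega
  rw [hsplit, Nat.add_mul_div_left _ _ hpow, Nat.div_eq_of_lt hA, Nat.zero_add,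
    Nat.add_mul_mod_self_left, Nat.mod_eq_of_lt (hf j hj)]

lemma digit_succ (n : ℕ) (k t : ℕ) :
    (t+1) / k % n = t / k % n ∨ (t+1) / k % n = t / k % n + 1 ∨
      (t / k % n = n - 1 ∧ (t+1) / k % n = 0) := by
  rcases Nat.eq_zero_or_pos k with rfl | hk
  · simp
  have h1 : t / k ≤ (t+1) / k := Nat.div_le_div_right (Nat.le_succ t)
  have h2 : (t+1) / k ≤ t / k + 1 := by
    calc (t+1)/k ≤ (t+k)/k := Nat.div_le_div_right (by omega)
      _ = t/k + 1 := by rw [Nat.add_div_right _ hk]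
  rcases Nat.eq_or_lt_of_le h1 with heq | hlt
  · left; rw [heq]
  have heq : (t+1)/k = t/k + 1 := by omega
  rw [heq]
  rcases Nat.lt_or_ge n 2 with hn2 | hn2
  · interval_cases n
    · right; left; simp
    · right; right; simp [Nat.mod_one]
  rcases Nat.lt_or_ge (t/k % n + 1) n with hlt2 | hge
  · right; left
    rw [Nat.add_mod, Nat.mod_eq_of_lt (by omega : 1 < n), Nat.mod_eq_of_lt hlt2]
  · right; right
    have hmod : t/k % n = n - 1 := by have := Nat.mod_lt (t/k) (by omega : 0 < n); omega
    refine ⟨hmod, ?_⟩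
    rw [Nat.add_mod, hmod, Nat.mod_eq_of_lt (by omega : 1 < n)]
    simp [Nat.sub_add_cancel (by omega : 1 ≤ n)]

lemma dist_mk_le (a b : ℝ) : dist ((a : AddCircle (1:ℝ))) b ≤ |a - b| := by
  rw [dist_eq_norm, ← QuotientAddGroup.mk_sub]
  exact QuotientAddGroup.norm_mk_le_norm.trans_eq (Real.norm_eq_abs _)

lemma sum_comp_sInf (F : ℕ → ℕ) (hF : Monotone F) (hF0 : F 0 = 0) (a : ℕ → ℝ) (m : ℕ) :
    ∑ j ∈ Finset.range (F m), a (sInf {t | j < F (t+1)}) =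
      ∑ t ∈ Finset.range m, ((F (t+1) - F t : ℕ) : ℝ) * a t := by
  induction m with
  | zero => simp [hF0]
  | succ m ih =>
    rw [Finset.range_eq_Ico, ← Finset.sum_Ico_consecutive _ (Nat.zero_le (F m)) (hF (Nat.le_succ m)),
      ← Finset.range_eq_Ico, ih, Finset.sum_range_succ]
    congr 1
    have hg : ∀ j ∈ Finset.Ico (F m) (F (m+1)), a (sInf {t | j < F (t+1)}) = a m := by
      intro j hj
      obtain ⟨hj1, hj2⟩ := Finset.mem_Ico.mp hj
      have hmem : m ∈ {t | j < F (t+1)} := hj2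
      have hle : sInf {t | j < F (t+1)} ≤ m := Nat.sInf_le hmem
      have hmem' := Nat.sInf_mem (⟨m, hmem⟩ : {t | j < F (t+1)}.Nonempty)
      have hge : m ≤ sInf {t | j < F (t+1)} := by
        by_contra hc
        push_neg at hc
        have h' : sInf {t | j < F (t+1)} + 1 ≤ m := hc
        have := hF h'
        exact absurd hmem' (by simp only [Set.mem_setOf_eq]; omega)
      rw [le_antisymm hle hge]
    rw [Finset.sum_congr rfl hg, Finset.sum_const, Nat.card_Ico, nsmul_eq_mul]

lemma center_dist (n a b : ℕ) (hn : 1 ≤ n)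
    (hab : b = a ∨ b = a + 1 ∨ (a = n - 1 ∧ b = 0)) :
    dist (((((a:ℝ)+1/2)/(n:ℝ) : ℝ) : AddCircle (1:ℝ)))
      (((((b:ℝ)+1/2)/(n:ℝ) : ℝ) : AddCircle (1:ℝ))) ≤ 1/(n:ℝ) := by
  have hn0 : (0:ℝ) < n := by exact_mod_cast hn
  rcases hab with rfl | rfl | ⟨rfl, rfl⟩
  · simp only [dist_self]; positivity
  · refine le_trans (dist_mk_le _ _) ?_
    rw [show ((a:ℝ)+1/2)/(n:ℝ) - (((a+1:ℕ):ℝ)+1/2)/(n:ℝ) = -(1/n) by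
      push_cast; field_simp; ring]
    rw [abs_neg, abs_of_pos (by positivity)]
  · have hco : ((((0:ℕ):ℝ)+1/2)/(n:ℝ) : AddCircle (1:ℝ))
        = ((((0:ℕ):ℝ)+1/2)/(n:ℝ) + 1 : ℝ) := (AddCircle.coe_add_period 1 _).symm
    rw [hco]
    refine le_trans (dist_mk_le _ _) ?_
    rw [show (((n-1:ℕ):ℝ)+1/2)/(n:ℝ) - ((((0:ℕ):ℝ)+1/2)/(n:ℝ) + 1) = -(1/n) by
      rw [Nat.cast_sub hn]; push_cast; field_simp; ring]
    rw [abs_neg, abs_of_pos (by positivity)]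

lemma dist_rep_center (n : ℕ) (hn : 1 ≤ n) (r : ℝ) (h0 : 0 ≤ r) :
    dist ((r : AddCircle (1:ℝ)))
      ((((((⌊(n:ℝ)*r⌋₊ : ℕ):ℝ)+1/2)/(n:ℝ) : ℝ) : AddCircle (1:ℝ))) ≤ 1/(2*(n:ℝ)) := by
  have hn0 : (0:ℝ) < n := by exact_mod_cast hn
  refine le_trans (dist_mk_le _ _) ?_
  have h1 : ((⌊(n:ℝ)*r⌋₊ : ℝ)) ≤ n*r := Nat.floor_le (by positivity)
  have h2 : (n:ℝ)*r < (⌊(n:ℝ)*r⌋₊ : ℝ) + 1 := Nat.lt_floor_add_one _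
  rw [show r - ((⌊(n:ℝ)*r⌋₊ : ℝ)+1/2)/n = ((n:ℝ)*r - (⌊(n:ℝ)*r⌋₊ : ℝ) - 1/2)/n by
    field_simp; ring]
  rw [show 1/(2*(n:ℝ)) = (1/2)/n by ring, abs_div, abs_of_pos hn0]
  gcongr
  rw [abs_le]; constructor <;> linarith

lemma two_le_rpow (d N : ℕ) (hd : 0 < d) (hN : 2 ^ d ≤ N) :
    (2:ℝ) ≤ (N:ℝ) ^ ((1:ℝ)/d) := by
  have hd0 : (d:ℝ) ≠ 0 := Nat.cast_ne_zero.mpr hd.ne'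
  have hcast : ((2:ℝ))^(d:ℕ) ≤ (N:ℝ) := by exact_mod_cast hN
  have h2 : (2:ℝ) = (((2:ℝ)^(d:ℕ)) : ℝ) ^ ((1:ℝ)/d) := by
    rw [← Real.rpow_natCast 2 d, ← Real.rpow_mul (by norm_num), mul_one_div,
      div_self hd0, Real.rpow_one]
  rw [h2]
  exact Real.rpow_le_rpow (by positivity) hcast (by positivity)

end NhAux

namespace NhAux

/-- Representative in `[0,1)` of a point of the circle. -/
def rep (y : AddCircle (1:ℝ)) : ℝ := (AddCircle.equivIco 1 0 y : ℝ)

lemma rep_nonneg (y : AddCircle (1:ℝ)) : 0 ≤ rep y := by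
  have := (AddCircle.equivIco 1 0 y).2
  simp only [Set.mem_Ico, zero_add] at this
  exact this.1

lemma rep_lt_one (y : AddCircle (1:ℝ)) : rep y < 1 := by
  have := (AddCircle.equivIco 1 0 y).2
  simp only [Set.mem_Ico, zero_add] at this
  exact this.2

lemma mk_rep (y : AddCircle (1:ℝ)) : ((rep y : ℝ) : AddCircle (1:ℝ)) = y :=
  (AddCircle.equivIco 1 0).symm_apply_apply y

lemma measurable_rep : Measurable rep :=
  measurable_subtype_coe.comp (AddCircle.measurableEquivIco 1 0).measurable

/-- `k`-th digit of the grid cell of `y`. -/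
def Dg (d n : ℕ) (y : Torus d) (k : ℕ) : ℕ :=
  if hk : k < d then ⌊(n:ℝ) * rep (y ⟨k, hk⟩)⌋₊ else 0

/-- index of the grid cell of `y`. -/
def idx (d n : ℕ) (y : Torus d) : ℕ := ∑ k ∈ Finset.range d, Dg d n y k * n ^ k

/-- center of the `t`-th grid cell. -/
def cen (d n : ℕ) (t : ℕ) : Torus d :=
  fun i => ((((t / n ^ (i:ℕ) % n : ℕ) : ℝ) + 1/2)/(n:ℝ) : ℝ)

lemma Dg_lt (d n : ℕ) (hn : 1 ≤ n) (y : Torus d) {k : ℕ} (hk : k < d) :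
    Dg d n y k < n := by
  have hn0 : (0:ℝ) < n := by exact_mod_cast hn
  rw [Dg, dif_pos hk]
  rw [Nat.floor_lt (mul_nonneg hn0.le (rep_nonneg _))]
  calc (n:ℝ) * rep (y ⟨k, hk⟩) < n * 1 :=
        mul_lt_mul_of_pos_left (rep_lt_one _) hn0
    _ = n := mul_one _

lemma idx_lt (d n : ℕ) (hn : 1 ≤ n) (y : Torus d) : idx d n y < n ^ d := by
  have := sum_digits_lt n (Dg d n y) d (fun i hi => Dg_lt d n hn y hi) hn
  rw [idx]; omega

lemma measurable_idx (d n : ℕ) : Measurable (idx d n) := by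
  apply Finset.measurable_sum
  intro k hk
  have hkd : k < d := Finset.mem_range.mp hk
  apply Measurable.mul_const
  simp only [Dg, dif_pos hkd]
  exact ((measurable_rep.comp (measurable_pi_apply (⟨k, hkd⟩ : Fin d))).const_mul ((n:ℝ))).nat_floor

lemma idx_digit (d n : ℕ) (hn : 1 ≤ n) (y : Torus d) (i : Fin d) :
    idx d n y / n ^ (i:ℕ) % n = Dg d n y i :=
  digit_recover n hn (Dg d n y) d (fun k hk => Dg_lt d n hn y hk) i.2

lemma dist_cen_idx (d n : ℕ) (hn : 1 ≤ n) (y : Torus d) :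
    dist y (cen d n (idx d n y)) ≤ 1/(2*(n:ℝ)) := by
  have hn0 : (0:ℝ) < n := by exact_mod_cast hn
  refine (dist_pi_le_iff (by positivity)).mpr (fun i => ?_)
  show dist (y i) _ ≤ _
  rw [cen]
  simp only [idx_digit d n hn y i]
  rw [Dg, dif_pos i.2]
  simp only [Fin.eta]
  have hthis := dist_rep_center n hn (rep (y i)) (rep_nonneg _)
  rw [mk_rep (y i)] at hthis
  exact hthis

lemma dist_cen_succ (d n : ℕ) (hn : 1 ≤ n) (t : ℕ) :
    dist (cen d n t) (cen d n (t+1)) ≤ 1/(n:ℝ) := by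
  have hn0 : (0:ℝ) < n := by exact_mod_cast hn
  refine (dist_pi_le_iff (by positivity)).mpr (fun i => ?_)
  exact center_dist n _ _ hn (digit_succ n (n ^ (i:ℕ)) t)

end NhAux


namespace NhAux

lemma key (d N : ℕ) (hd : 0 < d) (L : ℝ≥0) (h : Torus d → ℝ)
    (hLip : LipschitzWith L h) (hN : 2 ^ d ≤ N)
    (π : Measure (Torus d)) (hπ : IsProbabilityMeasure π) :
    ∃ μ ∈ nPointMeasures d N, nhDist h μ π ≤
      (L : ℝ) * (Real.sqrt d / 2 + 1) / ((N : ℝ) ^ ((1 : ℝ) / d) - 1) := by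
  classical
  have hd0 : (d:ℝ) ≠ 0 := Nat.cast_ne_zero.mpr hd.ne'
  have hN1 : 1 ≤ N := le_trans (Nat.one_le_two_pow) hN
  have hNR : (0:ℝ) < N := by exact_mod_cast hN1
  have hx2 : (2:ℝ) ≤ (N:ℝ) ^ ((1:ℝ)/d) := two_le_rpow d N hd hN
  set n : ℕ := ⌊(N:ℝ) ^ ((1:ℝ)/d)⌋₊ with hn_def
  have hn2 : 2 ≤ n := Nat.le_floor (by exact_mod_cast hx2)
  have hn1 : 1 ≤ n := le_trans (by norm_num) hn2
  have hnR : (0:ℝ) < n := by exact_mod_cast hn1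
  have hmN : n ^ d ≤ N := by
    have h1 : ((n:ℝ)) ^ (d:ℕ) ≤ ((N:ℝ) ^ ((1:ℝ)/d)) ^ (d:ℕ) :=
      pow_le_pow_left₀ (by positivity) (Nat.floor_le (by positivity)) d
    have h2 : ((N:ℝ) ^ ((1:ℝ)/d)) ^ (d:ℕ) = N := by
      rw [← Real.rpow_natCast ((N:ℝ) ^ ((1:ℝ)/d)) d, ← Real.rpow_mul (by positivity),
        one_div_mul_cancel hd0, Real.rpow_one]
    rw [h2] at h1
    exact_mod_cast h1
  have hflo : (N:ℝ) ^ ((1:ℝ)/d) - 1 ≤ n := by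
    have := Nat.lt_floor_add_one ((N:ℝ) ^ ((1:ℝ)/d))
    rw [← hn_def] at this
    linarith
  set m : ℕ := n ^ d with hm_def
  -- cells and cumulative distribution
  set Q : ℕ → Set (Torus d) := fun t => {y | idx d n y = t} with hQ_def
  set S : ℕ → Set (Torus d) := fun T => {y | idx d n y < T} with hS_def
  have hQm : ∀ t, MeasurableSet (Q t) := fun t =>
    measurable_idx d n (measurableSet_singleton t)
  have hSm : ∀ T, MeasurableSet (S T) := fun T =>
    measurable_idx d n (measurableSet_Iio (a := T))
  set Wf : ℕ → ℝ := fun T => (π (S T)).toReal with hWf_def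
  set Ff : ℕ → ℕ := fun T => ⌊(N:ℝ) * Wf T⌋₊ with hFf_def
  set p : Fin N → Torus d := fun j => cen d n (sInf {t | (j:ℕ) < Ff (t+1)}) with hp_def
  refine ⟨(N : ℝ≥0∞)⁻¹ • ∑ i, Measure.dirac (p i), ⟨p, rfl⟩, ?_⟩
  set μ : Measure (Torus d) := (N : ℝ≥0∞)⁻¹ • ∑ i, Measure.dirac (p i) with hμ_def
  -- basic facts about Wf and Ff
  have hWmono : Monotone Wf := fun s t hst =>
    ENNReal.toReal_mono (measure_ne_top _ _)
      (measure_mono (fun y hy => lt_of_lt_of_le hy hst))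
  have hWnn : ∀ t, 0 ≤ Wf t := fun t => ENNReal.toReal_nonneg
  have hW0 : Wf 0 = 0 := by
    have hS0 : S 0 = ∅ := by ext y; simp [hS_def]
    simp [hWf_def, hS0]
  have hWm : Wf m = 1 := by
    have hSu : S m = Set.univ := Set.eq_univ_of_forall (fun y => idx_lt d n hn1 y)
    rw [hWf_def]
    simp only [hSu, measure_univ, ENNReal.toReal_one]
  have hWsucc : ∀ t, Wf (t+1) = Wf t + (π (Q t)).toReal := by
    intro t
    have hun : S (t+1) = S t ∪ Q t := by
      ext y; simp only [hS_def, hQ_def, Set.mem_setOf_eq, Set.mem_union]; omega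
    have hdisj : Disjoint (S t) (Q t) := by
      rw [Set.disjoint_left]
      intro y hy hy2
      simp only [hS_def, hQ_def, Set.mem_setOf_eq] at hy hy2
      omega
    rw [hWf_def]
    simp only
    rw [hun, measure_union hdisj (hQm t),
      ENNReal.toReal_add (measure_ne_top _ _) (measure_ne_top _ _)]
  have hFmono : Monotone Ff := fun s t hst =>
    Nat.floor_mono (mul_le_mul_of_nonneg_left (hWmono hst) (Nat.cast_nonneg N))
  have hF0 : Ff 0 = 0 := by simp [hFf_def, hW0]
  have hFm : Ff m = N := by
    rw [hFf_def]
    simp only [hWm, mul_one, Nat.floor_natCast]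
  have hFle : ∀ t, (Ff t : ℝ) ≤ N * Wf t := fun t =>
    Nat.floor_le (mul_nonneg (Nat.cast_nonneg N) (hWnn t))
  have hFgt : ∀ t, (N:ℝ) * Wf t < Ff t + 1 := fun t => Nat.lt_floor_add_one _
  set E : ℕ → ℝ := fun t => (Ff t : ℝ)/N - Wf t with hE_def
  have hE : ∀ t, |E t| ≤ 1/N := by
    intro t
    rw [hE_def]
    have h1 : (Ff t:ℝ)/N - Wf t = ((Ff t:ℝ) - N * Wf t)/N := by field_simp
    simp only
    rw [h1, abs_div, abs_of_pos hNR]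
    gcongr
    rw [abs_le]
    constructor <;> [linarith [hFgt t]; linarith [hFle t]]
  have hE0 : E 0 = 0 := by simp [hE_def, hF0, hW0]
  have hEm : E m = 0 := by
    rw [hE_def]; simp only [hFm, hWm]; rw [div_self hNR.ne']; ring
  -- integrability
  have hcont : ∀ x : Torus d, Continuous fun y : Torus d => h (x - y) := fun x =>
    hLip.continuous.comp (continuous_const.sub continuous_id)
  have hIntπ : ∀ x : Torus d, Integrable (fun y => h (x - y)) π := fun x =>
    (hcont x).integrable_of_hasCompactSupport (isClosed_tsupport _).isCompact
  have hIntd : ∀ (x z : Torus d), Integrable (fun y => h (x - y)) (Measure.dirac z) :=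
    fun x z =>
    (hcont x).integrable_of_hasCompactSupport (isClosed_tsupport _).isCompact
  -- step 1 : integral against μ
  have step1 : ∀ x, ∫ y, h (x - y) ∂μ
      = (N:ℝ)⁻¹ * ∑ t ∈ Finset.range m,
          ((Ff (t+1) - Ff t : ℕ) : ℝ) * h (x - cen d n t) := by
    intro x
    rw [hμ_def, integral_smul_measure,
      integral_finset_sum_measure (fun i _ => hIntd x (p i))]
    simp only [integral_dirac, ENNReal.toReal_inv, ENNReal.toReal_natCast, smul_eq_mul]
    congr 1
    have hsum := Fin.sum_univ_eq_sum_range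
      (fun j => h (x - cen d n (sInf {t | j < Ff (t+1)}))) N
    rw [hp_def]
    simp only
    rw [hsum]
    have := sum_comp_sInf Ff hFmono hF0 (fun t => h (x - cen d n t)) m
    rw [hFm] at this
    exact this
  -- step 2 : integral against π decomposed over cells
  have step2 : ∀ x, ∫ y, h (x - y) ∂π
      = ∑ t ∈ Finset.range m, ∫ y in Q t, h (x - y) ∂π := by
    intro x
    have hind : ∀ T, ∫ y in S T, h (x - y) ∂π
        = ∑ t ∈ Finset.range T, ∫ y in Q t, h (x - y) ∂π := by
      intro T
      induction T with
      | zero =>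
        have hS0 : S 0 = ∅ := by ext y; simp [hS_def]
        simp [hS0]
      | succ T ih =>
        have hun : S (T+1) = S T ∪ Q T := by
          ext y; simp only [hS_def, hQ_def, Set.mem_setOf_eq, Set.mem_union]; omega
        have hdisj : Disjoint (S T) (Q T) := by
          rw [Set.disjoint_left]
          intro y hy hy2
          simp only [hS_def, hQ_def, Set.mem_setOf_eq] at hy hy2
          omega
        rw [hun, setIntegral_union hdisj (hQm T) ((hIntπ x).integrableOn)
          ((hIntπ x).integrableOn), ih, Finset.sum_range_succ]
    have hSu : S m = Set.univ := Set.eq_univ_of_forall (fun y => idx_lt d n hn1 y)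
    rw [← setIntegral_univ (f := fun y => h (x - y)) (μ := π), ← hSu, hind m]
  -- pointwise bound on the convolution difference
  have hconv : ∀ x, |convDiff h μ π x| ≤ (L:ℝ)/n + (L:ℝ)/(2*n) := by
    intro x
    set a : ℕ → ℝ := fun t => h (x - cen d n t) with ha_def
    have hΔ : ∀ t, |a t - a (t+1)| ≤ (L:ℝ)/n := by
      intro t
      have h1 := hLip.dist_le_mul (x - cen d n t) (x - cen d n (t+1))
      rw [Real.dist_eq, dist_sub_left] at h1
      calc |a t - a (t+1)| ≤ (L:ℝ) * dist (cen d n t) (cen d n (t+1)) := h1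
        _ ≤ (L:ℝ) * (1/n) := by
            exact mul_le_mul_of_nonneg_left (dist_cen_succ d n hn1 t) (L.coe_nonneg)
        _ = (L:ℝ)/n := by ring
    rw [convDiff, step1 x, step2 x, Finset.mul_sum, ← Finset.sum_sub_distrib]
    have hterm : ∀ t ∈ Finset.range m,
        (N:ℝ)⁻¹ * (((Ff (t+1) - Ff t : ℕ):ℝ) * a t) - ∫ y in Q t, h (x - y) ∂π
        = (E (t+1) * (a t - a (t+1)) + (E (t+1) * a (t+1) - E t * a t))
          + ∫ y in Q t, (a t - h (x - y)) ∂π := by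
      intro t _
      have hcast : ((Ff (t+1) - Ff t : ℕ):ℝ) = (Ff (t+1):ℝ) - Ff t :=
        Nat.cast_sub (hFmono (Nat.le_succ t))
      have hconstInt : IntegrableOn (fun _ => a t) (Q t) π :=
        integrableOn_const (measure_lt_top _ _).ne
      have hsplitJ : ∫ y in Q t, (a t - h (x - y)) ∂π
          = (π (Q t)).toReal * a t - ∫ y in Q t, h (x - y) ∂π := by
        rw [integral_sub hconstInt ((hIntπ x).integrableOn), setIntegral_const,
          smul_eq_mul, measureReal_def]
      have hw : (π (Q t)).toReal = Wf (t+1) - Wf t := by rw [hWsucc t]; ring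
      rw [hsplitJ, hcast, hw, hE_def]
      simp only
      field_simp
      ring
    rw [Finset.sum_congr rfl hterm, Finset.sum_add_distrib, Finset.sum_add_distrib]
    have htel : ∑ t ∈ Finset.range m, (E (t+1) * a (t+1) - E t * a t)
        = E m * a m - E 0 * a 0 :=
      Finset.sum_range_sub (fun t => E t * a t) m
    rw [htel, hEm, hE0]
    simp only [zero_mul, sub_self, add_zero]
    have hmle : (m:ℝ) ≤ N := by exact_mod_cast hmN
    have hX : |∑ t ∈ Finset.range m, E (t+1) * (a t - a (t+1))| ≤ (L:ℝ)/n := by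
      calc |∑ t ∈ Finset.range m, E (t+1) * (a t - a (t+1))|
          ≤ ∑ t ∈ Finset.range m, |E (t+1) * (a t - a (t+1))| :=
            Finset.abs_sum_le_sum_abs _ _
        _ ≤ ∑ _t ∈ Finset.range m, (1/N * ((L:ℝ)/n)) := by
            refine Finset.sum_le_sum (fun t _ => ?_)
            rw [abs_mul]
            exact mul_le_mul (hE (t+1)) (hΔ t) (abs_nonneg _) (by positivity)
        _ = (m:ℝ) * (1/N * ((L:ℝ)/n)) := by
            rw [Finset.sum_const, Finset.card_range, nsmul_eq_mul]
        _ = ((m:ℝ)/N) * ((L:ℝ)/n) := by ring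
        _ ≤ 1 * ((L:ℝ)/n) :=
            mul_le_mul_of_nonneg_right ((div_le_one hNR).mpr hmle) (by positivity)
        _ = (L:ℝ)/n := one_mul _
    have hZt : ∀ t ∈ Finset.range m,
        |∫ y in Q t, (a t - h (x - y)) ∂π| ≤ ((L:ℝ)/(2*n)) * (Wf (t+1) - Wf t) := by
      intro t _
      have hwt : (π (Q t)).toReal = Wf (t+1) - Wf t := by rw [hWsucc t]; ring
      have hae : ∀ᵐ y ∂π.restrict (Q t), ‖a t - h (x - y)‖ ≤ (L:ℝ)/(2*n) := by
        rw [ae_restrict_iff' (hQm t)]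
        refine Eventually.of_forall (fun y hy => ?_)
        have hyt : idx d n y = t := hy
        rw [Real.norm_eq_abs]
        have h1 := hLip.dist_le_mul (x - cen d n t) (x - y)
        rw [Real.dist_eq, dist_sub_left] at h1
        have h2 : dist (cen d n t) y ≤ 1/(2*(n:ℝ)) := by
          rw [dist_comm, ← hyt]
          exact dist_cen_idx d n hn1 y
        calc |a t - h (x - y)| ≤ (L:ℝ) * dist (cen d n t) y := h1
          _ ≤ (L:ℝ) * (1/(2*(n:ℝ))) := mul_le_mul_of_nonneg_left h2 L.coe_nonneg
          _ = (L:ℝ)/(2*n) := by ring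
      have hb := norm_setIntegral_le_of_norm_le_const_ae
        (μ := π) (s := Q t) (f := fun y => a t - h (x - y))
        (measure_lt_top _ _) hae
      rw [Real.norm_eq_abs, measureReal_def, hwt] at hb
      exact hb
    have hZ : |∑ t ∈ Finset.range m, ∫ y in Q t, (a t - h (x - y)) ∂π|
        ≤ (L:ℝ)/(2*n) := by
      calc |∑ t ∈ Finset.range m, ∫ y in Q t, (a t - h (x - y)) ∂π|
          ≤ ∑ t ∈ Finset.range m, |∫ y in Q t, (a t - h (x - y)) ∂π| :=
            Finset.abs_sum_le_sum_abs _ _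
        _ ≤ ∑ t ∈ Finset.range m, ((L:ℝ)/(2*n)) * (Wf (t+1) - Wf t) :=
            Finset.sum_le_sum hZt
        _ = ((L:ℝ)/(2*n)) * ∑ t ∈ Finset.range m, (Wf (t+1) - Wf t) := by
            rw [Finset.mul_sum]
        _ = ((L:ℝ)/(2*n)) * (Wf m - Wf 0) := by rw [Finset.sum_range_sub Wf m]
        _ = (L:ℝ)/(2*n) := by rw [hWm, hW0]; ring
    calc |∑ t ∈ Finset.range m, E (t+1) * (a t - a (t+1))
            + ∑ t ∈ Finset.range m, ∫ y in Q t, (a t - h (x - y)) ∂π|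
        ≤ |∑ t ∈ Finset.range m, E (t+1) * (a t - a (t+1))|
            + |∑ t ∈ Finset.range m, ∫ y in Q t, (a t - h (x - y)) ∂π| := abs_add_le _ _
      _ ≤ (L:ℝ)/n + (L:ℝ)/(2*n) := add_le_add hX hZ
  -- L² bound from the sup bound
  have hface : nhDist h μ π ≤ (L:ℝ)/n + (L:ℝ)/(2*n) := by
    have hB0 : (0:ℝ) ≤ (L:ℝ)/n + (L:ℝ)/(2*n) := by positivity
    rw [nhDist]
    by_cases hi : Integrable (fun x : Torus d => (convDiff h μ π x)^2) volume
    · have hle : ∫ x : Torus d, (convDiff h μ π x)^2 ≤ ((L:ℝ)/n + (L:ℝ)/(2*n))^2 := by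
        have hmono := integral_mono hi (integrable_const (((L:ℝ)/n + (L:ℝ)/(2*n))^2))
          (fun x => by
            obtain ⟨hl, hr⟩ := abs_le.mp (hconv x)
            exact sq_le_sq' (by linarith) hr)
        rwa [integral_const, measureReal_def, measure_univ, ENNReal.toReal_one, one_smul] at hmono
      calc Real.sqrt (∫ x : Torus d, (convDiff h μ π x)^2)
          ≤ Real.sqrt (((L:ℝ)/n + (L:ℝ)/(2*n))^2) := Real.sqrt_le_sqrt hle
        _ = (L:ℝ)/n + (L:ℝ)/(2*n) := Real.sqrt_sq hB0
    · rw [integral_undef hi, Real.sqrt_zero]; exact hB0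
  -- compare with the stated bound
  have hsq1 : (1:ℝ) ≤ Real.sqrt d := by
    rw [show (1:ℝ) = Real.sqrt 1 from (Real.sqrt_one).symm]
    exact Real.sqrt_le_sqrt (by exact_mod_cast hd)
  have hD1 : (1:ℝ) ≤ (N:ℝ) ^ ((1:ℝ)/d) - 1 := by linarith
  refine hface.trans ?_
  calc (L:ℝ)/n + (L:ℝ)/(2*n) = (L:ℝ)*(3/2)/n := by field_simp; ring
    _ ≤ (L:ℝ)*(3/2)/((N:ℝ) ^ ((1:ℝ)/d) - 1) := by gcongr <;> linarith
    _ ≤ (L:ℝ)*(Real.sqrt d/2 + 1)/((N:ℝ) ^ ((1:ℝ)/d) - 1) := by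
        have hnum : (L:ℝ)*(3/2) ≤ (L:ℝ)*(Real.sqrt d/2 + 1) :=
          mul_le_mul_of_nonneg_left (by linarith) L.coe_nonneg
        exact (div_le_div_iff_of_pos_right (by linarith)).mpr hnum

end NhAux

/-- For an `L`-Lipschitz kernel `h` and `N ≥ 2^d`,
`sup_π inf_{μ ∈ 𝓜(Ω^N)} N_h(μ − π) ≤ L(√d/2 + 1)/(N^{1/d} − 1)`. -/
theorem nh_nPoint_approx_bound (d N : ℕ) (L : ℝ≥0) (h : Torus d → ℝ)
    (hLip : LipschitzWith L h) (hN : 2 ^ d ≤ N) :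
    sSup { r : ℝ | ∃ π : Measure (Torus d), IsProbabilityMeasure π ∧
          r = sInf ((fun μ => nhDist h μ π) '' nPointMeasures d N) } ≤
      (L : ℝ) * (Real.sqrt d / 2 + 1) / ((N : ℝ) ^ ((1 : ℝ) / d) - 1) := by
  classical
  have hRHS : (0:ℝ) ≤ (L : ℝ) * (Real.sqrt d / 2 + 1) / ((N : ℝ) ^ ((1 : ℝ) / d) - 1) := by
    rcases Nat.eq_zero_or_pos d with rfl | hd
    · simp [Real.rpow_zero]
    · have h2 := NhAux.two_le_rpow d N hd hN
      have hnum : (0:ℝ) ≤ (L : ℝ) * (Real.sqrt d / 2 + 1) := by positivity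
      exact div_nonneg hnum (by linarith)
  refine Real.sSup_le ?_ hRHS
  rintro r ⟨π, hπ, rfl⟩
  have hbdd : BddBelow ((fun μ => nhDist h μ π) '' nPointMeasures d N) := by
    refine ⟨0, ?_⟩
    rintro s ⟨ν, -, rfl⟩
    exact Real.sqrt_nonneg _
  rcases Nat.eq_zero_or_pos d with rfl | hd
  · -- degenerate case `d = 0`
    have hN1 : 1 ≤ N := le_trans (Nat.one_le_two_pow) hN
    set p : Fin N → Torus 0 := fun _ => (fun i => 0) with hp_def
    set μ : Measure (Torus 0) := (N : ℝ≥0∞)⁻¹ • ∑ i, Measure.dirac (p i) with hμ_def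
    have hmem : μ ∈ nPointMeasures 0 N := ⟨p, rfl⟩
    have hconst : ∀ (f : Torus 0 → ℝ) (x y : Torus 0), f (x - y) = f 0 :=
      fun f x y => congrArg f (Subsingleton.elim _ _)
    have hzero : nhDist h μ π = 0 := by
      have hcd : ∀ x, convDiff h μ π x = 0 := by
        intro x
        rw [convDiff]
        have hfun : (fun y : Torus 0 => h (x - y)) = fun _ => h 0 :=
          funext (fun y => hconst h x y)
        rw [hfun]
        rw [integral_const, integral_const]
        have hμu : μ Set.univ = 1 := by
          rw [hμ_def]
          simp only [Measure.smul_apply, Measure.coe_finset_sum, Finset.sum_apply,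
            Measure.dirac_apply' _ MeasurableSet.univ, Set.indicator_univ,
            Pi.one_apply, Finset.sum_const, Finset.card_univ, Fintype.card_fin, smul_eq_mul,
            nsmul_eq_mul, mul_one]
          rw [ENNReal.inv_mul_cancel (by
              simp only [ne_eq, Nat.cast_eq_zero]
              omega) (ENNReal.natCast_ne_top N)]
        rw [measureReal_def, measureReal_def, hμu, measure_univ]
        simp
      rw [nhDist]
      have : (fun x : Torus 0 => (convDiff h μ π x)^2) = fun _ => 0 := by
        funext x; rw [hcd x]; ring
      rw [this]
      simp
    have hRHS0 : (L : ℝ) * (Real.sqrt (0:ℕ) / 2 + 1) / ((N : ℝ) ^ ((1 : ℝ) / (0:ℕ)) - 1)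
        = 0 := by simp [Real.rpow_zero]
    rw [hRHS0]
    refine csInf_le_of_le hbdd (Set.mem_image_of_mem _ hmem) (le_of_eq hzero)
  · obtain ⟨μ, hmem, hle⟩ := NhAux.key d N hd L h hLip hN π hπ
    exact csInf_le_of_le hbdd (Set.mem_image_of_mem _ hmem) hle
end
end

section
/- Let Ω = ℝ^d/ℤ^d, let h : Ω → ℝ be L-Lipschitz with ĥ(ξ) ≠ 0 for all ξ, let 𝓜_N be a nonempty set of Borel probability measures on Ω, and for n ≥ 2^d set ε = (√d/2 + 1)·L/(n^{1/d} − 1) and 𝓐_n^ε = 𝓜(Ω^n) ∩ 𝓜_N^ε, where 𝓜_N^ε = ∪_{μ_N∈𝓜_N} { μ ∈ M_Δ : N_h(μ − μ_N) ≤ ε } is the ε-enlargement of 𝓜_N in the N_h-norm. Then 𝓐_n^ε is nonempty and the Hausdorff distance satisfies 𝓗_{N_h}(𝓐_n^ε, 𝓜_N) ≤ ε, i.e. 𝓗_{N_h}(𝓐_n^ε, 𝓜_N) = O(L·n^{−1/d}). -/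
open MeasureTheory Filter Topology
open scoped NNReal ENNReal

noncomputable section

instance : IsProbabilityMeasure (volume : Measure (AddCircle (1:ℝ))) :=
  ⟨by rw [AddCircle.measure_univ]; norm_num⟩
noncomputable def rep (y : AddCircle (1:ℝ)) : ℝ :=
  ((AddCircle.measurableEquivIco (1:ℝ) 0 y : Set.Ico (0:ℝ) (0+1)) : ℝ)

lemma rep_mem (y : AddCircle (1:ℝ)) : rep y ∈ Set.Ico (0:ℝ) 1 := by
  have := (AddCircle.measurableEquivIco (1:ℝ) 0 y).2
  simpa [rep] using this

lemma rep_coe (y : AddCircle (1:ℝ)) : ((rep y : ℝ) : AddCircle (1:ℝ)) = y := by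
  have := (AddCircle.equivIco (1:ℝ) 0).symm_apply_apply y
  conv_rhs => rw [← this]
  rfl

lemma rep_measurable : Measurable rep :=
  measurable_subtype_coe.comp (AddCircle.measurableEquivIco (1:ℝ) 0).measurable

lemma dist_coe_le (u v : ℝ) : dist ((u:AddCircle (1:ℝ))) ((v:AddCircle (1:ℝ))) ≤ |u - v| := by
  rw [dist_eq_norm, ← AddCircle.coe_sub]
  exact (QuotientAddGroup.norm_mk_le_norm).trans_eq (Real.norm_eq_abs _)

lemma coe_int_add (u : ℝ) (k : ℤ) : (((u + k : ℝ)) : AddCircle (1:ℝ)) = (u : AddCircle (1:ℝ)) := by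
  rw [AddCircle.coe_add]
  have : ((k:ℝ) : AddCircle (1:ℝ)) = 0 := by
    rw [QuotientAddGroup.eq_zero_iff]
    exact ⟨k, by simp⟩
  rw [this, add_zero]

noncomputable def dg (m : ℕ) (y : AddCircle (1:ℝ)) : ℕ := ⌊(m:ℝ) * rep y⌋₊

lemma dg_lt {m : ℕ} (hm : 0 < m) (y : AddCircle (1:ℝ)) : dg m y < m := by
  have hm' : (0:ℝ) < m := Nat.cast_pos.2 hm
  have h0 : 0 ≤ (m:ℝ) * rep y := mul_nonneg hm'.le (rep_mem y).1
  have h1 : (m:ℝ) * rep y < m := by nlinarith [(rep_mem y).2, (rep_mem y).1]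
  exact (Nat.floor_lt h0).2 h1

lemma dg_le {m : ℕ} (y : AddCircle (1:ℝ)) : (dg m y : ℝ) ≤ (m:ℝ) * rep y :=
  Nat.floor_le (mul_nonneg (Nat.cast_nonneg m) (rep_mem y).1)

lemma lt_dg_add_one {m : ℕ} (y : AddCircle (1:ℝ)) : (m:ℝ) * rep y < dg m y + 1 :=
  Nat.lt_floor_add_one _

noncomputable def cen {d : ℕ} (m t : ℕ) : Torus d :=
  fun i => (((t / m ^ (i:ℕ) % m : ℕ) + 2⁻¹) / m : ℝ)

noncomputable def idx {d : ℕ} (m : ℕ) (y : Torus d) : ℕ :=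
  ∑ i : Fin d, dg m (y i) * m ^ (i:ℕ)

lemma idx_eq_equiv {d m : ℕ} (hm : 0 < m) (y : Torus d) :
    idx m y = (finFunctionFinEquiv (fun j => (⟨dg m (y j), dg_lt hm _⟩ : Fin m)) : ℕ) := by
  simp [idx, finFunctionFinEquiv_apply]

lemma idx_lt {d m : ℕ} (hm : 0 < m) (y : Torus d) : idx m y < m ^ d := by
  rw [idx_eq_equiv hm]; exact Fin.is_lt _

lemma digit_idx {d m : ℕ} (hm : 0 < m) (y : Torus d) (i : Fin d) :
    idx m y / m ^ (i:ℕ) % m = dg m (y i) := by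
  set f : Fin d → Fin m := fun j => (⟨dg m (y j), dg_lt hm _⟩ : Fin m) with hf
  have h2 := congrFun (finFunctionFinEquiv.symm_apply_apply f) i
  have h3 : (finFunctionFinEquiv.symm (finFunctionFinEquiv f) i : ℕ) = (f i : ℕ) :=
    congrArg Fin.val h2
  rw [idx_eq_equiv hm]
  rw [show (finFunctionFinEquiv f : ℕ) / m ^ (i:ℕ) % m
      = (finFunctionFinEquiv.symm (finFunctionFinEquiv f) i : ℕ) from rfl, h3]

lemma measurable_dg {m : ℕ} : Measurable (dg m) :=
  (rep_measurable.const_mul _).nat_floor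

lemma measurable_idx {d m : ℕ} : Measurable (idx (d := d) m) :=
  Finset.measurable_sum _ fun i _ =>
    ((measurable_dg.comp (measurable_pi_apply i)).mul_const _)

lemma dist_cen_idx {d m : ℕ} (hm : 0 < m) (y : Torus d) :
    dist y (cen m (idx m y)) ≤ 1 / (2 * m) := by
  have hm' : (0:ℝ) < m := Nat.cast_pos.2 hm
  rw [dist_pi_le_iff (by positivity)]
  intro i
  have hc : cen (d := d) m (idx m y) i = ((((dg m (y i) : ℝ) + 2⁻¹) / m : ℝ) : AddCircle (1:ℝ)) := by
    simp [cen, digit_idx hm]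
  rw [hc]
  calc dist (y i) (((((dg m (y i) : ℝ) + 2⁻¹) / m : ℝ)) : AddCircle (1:ℝ))
      = dist (((rep (y i) : ℝ)) : AddCircle (1:ℝ)) ((((dg m (y i) : ℝ) + 2⁻¹) / m : ℝ)) := by
        rw [rep_coe]
    _ ≤ |rep (y i) - ((dg m (y i) : ℝ) + 2⁻¹) / m| := dist_coe_le _ _
    _ ≤ 1 / (2 * m) := by
        have h1 := dg_le (m := m) (y i)
        have h2 := lt_dg_add_one (m := m) (y i)
        have e : rep (y i) - ((dg m (y i) : ℝ) + 2⁻¹) / m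
            = ((m:ℝ) * rep (y i) - ((dg m (y i) : ℝ) + 2⁻¹)) / m := by
          field_simp
        rw [e, abs_div, abs_of_pos hm', div_le_div_iff₀ hm' (by positivity)]
        have : |(m:ℝ) * rep (y i) - ((dg m (y i) : ℝ) + 2⁻¹)| ≤ 2⁻¹ := by
          rw [abs_le]; constructor <;> nlinarith
        nlinarith

lemma dist_cen_succ {d m : ℕ} (hm : 0 < m) (t : ℕ) :
    dist (cen (d := d) m t) (cen (d := d) m (t + 1)) ≤ 1 / m := by
  have hm' : (0:ℝ) < m := Nat.cast_pos.2 hm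
  rw [dist_pi_le_iff (by positivity)]
  intro i
  set a := t / m ^ (i:ℕ) with ha
  have hdiv : (t + 1) / m ^ (i:ℕ) = a ∨ (t + 1) / m ^ (i:ℕ) = a + 1 := by
    have h1 : a ≤ (t + 1) / m ^ (i:ℕ) := Nat.div_le_div_right (Nat.le_succ t)
    have h2 : (t + 1) / m ^ (i:ℕ) ≤ a + 1 := by
      have hp : 1 ≤ m ^ (i:ℕ) := Nat.one_le_pow _ _ hm
      calc (t + 1) / m ^ (i:ℕ) ≤ (t + m ^ (i:ℕ)) / m ^ (i:ℕ) :=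
            Nat.div_le_div_right (by omega)
        _ = a + 1 := by rw [Nat.add_div_right _ (by omega)]
    omega
  rcases hdiv with hd | hd
  · have : cen (d := d) m (t+1) i = cen (d := d) m t i := by simp [cen, hd, ha]
    rw [this, dist_self]
    positivity
  · have h2 : cen (d := d) m (t+1) i
        = ((((a % m : ℕ) + 1 + 2⁻¹) / m : ℝ) : AddCircle (1:ℝ)) := by
      have hlt : a % m < m := Nat.mod_lt _ hm
      have hmod : (a + 1) % m = (a % m + 1) % m := (Nat.mod_add_mod a m 1).symm
      rcases Nat.lt_or_ge (a % m + 1) m with hc | hc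
      · have : (a + 1) % m = a % m + 1 := by rw [hmod]; exact Nat.mod_eq_of_lt hc
        simp only [cen, hd, this]
        push_cast
        ring_nf
      · have hceq : a % m + 1 = m := by omega
        have hz : (a + 1) % m = 0 := by rw [hmod, hceq, Nat.mod_self]
        simp only [cen, hd, hz]
        have hm1 : ((a % m : ℕ) : ℝ) = (m:ℝ) - 1 := by
          have := congrArg (fun k : ℕ => (k:ℝ)) hceq
          push_cast at this
          linarith
        have e1 : (((a % m : ℕ) : ℝ) + 1 + 2⁻¹) / m = (((0:ℕ):ℝ) + 2⁻¹) / m + ((1:ℤ):ℝ) := by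
          rw [hm1]
          push_cast
          field_simp
          ring
        rw [e1, coe_int_add]
    have h1 : cen (d := d) m t i = ((((a % m : ℕ) + 2⁻¹) / m : ℝ) : AddCircle (1:ℝ)) := by
      simp [cen, ha]
    rw [h1, h2]
    calc dist _ _ ≤ |(((a % m : ℕ) : ℝ) + 2⁻¹) / m - (((a % m : ℕ) : ℝ) + 1 + 2⁻¹) / m| :=
          dist_coe_le _ _
      _ = 1 / m := by
          rw [div_sub_div_same, show (((a % m : ℕ) : ℝ) + 2⁻¹) - (((a % m : ℕ) : ℝ) + 1 + 2⁻¹) = -1 by ring]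
          rw [abs_div, abs_neg, abs_one, abs_of_pos hm']

lemma abel_sum (S b : ℕ → ℝ) (M : ℕ) :
    ∑ t ∈ Finset.range M, (S (t+1) - S t) * b t
      = S M * b M - S 0 * b 0 - ∑ t ∈ Finset.range M, S (t+1) * (b (t+1) - b t) := by
  induction M with
  | zero => simp
  | succ M ih => rw [Finset.sum_range_succ, Finset.sum_range_succ, ih]; ring

noncomputable def Fc {d : ℕ} (m : ℕ) (ν : Measure (Torus d)) (t : ℕ) : ℝ :=
  (ν {y | idx m y < t}).toReal

lemma Fc_nonneg {d m : ℕ} (ν : Measure (Torus d)) (t : ℕ) : 0 ≤ Fc m ν t :=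
  ENNReal.toReal_nonneg

lemma Fc_zero {d m : ℕ} (ν : Measure (Torus d)) : Fc m ν 0 = 0 := by
  have : {y : Torus d | idx m y < 0} = ∅ := by ext y; simp
  simp [Fc, this]

lemma Fc_mono {d m : ℕ} (ν : Measure (Torus d)) [IsFiniteMeasure ν] : Monotone (Fc m ν) :=
  fun s t hst => ENNReal.toReal_mono (measure_ne_top _ _)
    (measure_mono fun y hy => lt_of_lt_of_le hy hst)

lemma Fc_one {d m : ℕ} (ν : Measure (Torus d)) [IsProbabilityMeasure ν] (hm : 0 < m)
    {t : ℕ} (ht : m ^ d ≤ t) : Fc m ν t = 1 := by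
  have : {y : Torus d | idx m y < t} = Set.univ := by
    ext y; simp only [Set.mem_setOf_eq, Set.mem_univ, iff_true]
    exact lt_of_lt_of_le (idx_lt hm y) ht
  simp [Fc, this]

lemma measurableSet_idx_lt {d m : ℕ} (t : ℕ) : MeasurableSet {y : Torus d | idx m y < t} :=
  measurable_idx (show MeasurableSet (Set.Iio t) from (Set.to_countable _).measurableSet)

lemma measurableSet_idx_eq {d m : ℕ} (t : ℕ) : MeasurableSet {y : Torus d | idx m y = t} :=
  measurable_idx (show MeasurableSet {t} from (Set.to_countable _).measurableSet)

lemma Fc_diff {d m : ℕ} (ν : Measure (Torus d)) [IsFiniteMeasure ν] (t : ℕ) :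
    (ν {y | idx m y = t}).toReal = Fc m ν (t+1) - Fc m ν t := by
  have hsub : {y : Torus d | idx m y < t + 1} = {y | idx m y < t} ∪ {y | idx m y = t} := by
    ext y; simp only [Set.mem_setOf_eq, Set.mem_union]; omega
  have hdisj : Disjoint {y : Torus d | idx m y < t} {y | idx m y = t} := by
    rw [Set.disjoint_left]; intro y hy1 hy2
    simp only [Set.mem_setOf_eq] at hy1 hy2; omega
  have := measure_union (μ := ν) hdisj (measurableSet_idx_eq t)
  rw [← hsub] at this
  have h1 := measure_ne_top ν {y : Torus d | idx m y < t}
  have h2 := measure_ne_top ν {y : Torus d | idx m y = t}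
  rw [Fc, Fc, this, ENNReal.toReal_add h1 h2]
  ring

lemma idx_repr {d m : ℕ} (hm : 0 < m) (f : ℕ → ℝ) (y : Torus d) :
    f (idx m y)
      = ∑ t ∈ Finset.range (m ^ d),
          Set.indicator {y' : Torus d | idx m y' = t} (fun _ => f t) y := by
  rw [Finset.sum_eq_single_of_mem (idx m y) (Finset.mem_range.2 (idx_lt hm y))]
  · rw [Set.indicator_of_mem (by simp : y ∈ {y' : Torus d | idx m y' = idx m y})]
  · intro t _ hne
    exact Set.indicator_of_notMem (by simp [Ne.symm hne]) _

lemma integrable_comp_idx {d m : ℕ} (ν : Measure (Torus d)) [IsFiniteMeasure ν]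
    (hm : 0 < m) (f : ℕ → ℝ) : Integrable (fun y => f (idx m y)) ν := by
  rw [integrable_congr (Filter.Eventually.of_forall (idx_repr hm f))]
  refine integrable_finset_sum _ fun t _ => ?_
  rw [integrable_indicator_iff (measurableSet_idx_eq t)]
  exact integrableOn_const

lemma integral_comp_idx {d m : ℕ} (ν : Measure (Torus d)) [IsProbabilityMeasure ν]
    (hm : 0 < m) (f : ℕ → ℝ) :
    ∫ y, f (idx m y) ∂ν
      = ∑ t ∈ Finset.range (m ^ d), (Fc m ν (t+1) - Fc m ν t) * f t := by
  have hrepr := idx_repr (d := d) hm f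
  calc ∫ y, f (idx m y) ∂ν
      = ∫ y, ∑ t ∈ Finset.range (m ^ d),
          Set.indicator {y' : Torus d | idx m y' = t} (fun _ => f t) y ∂ν := by
        exact integral_congr_ae (Filter.Eventually.of_forall hrepr)
    _ = ∑ t ∈ Finset.range (m ^ d),
          ∫ y, Set.indicator {y' : Torus d | idx m y' = t} (fun _ => f t) y ∂ν := by
        refine integral_finset_sum _ fun t _ => ?_
        rw [integrable_indicator_iff (measurableSet_idx_eq t)]
        exact integrableOn_const
    _ = ∑ t ∈ Finset.range (m ^ d), (Fc m ν (t+1) - Fc m ν t) * f t := by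
        refine Finset.sum_congr rfl fun t _ => ?_
        rw [integral_indicator_const _ (measurableSet_idx_eq t), smul_eq_mul, Measure.real, Fc_diff]

noncomputable def Gc {d : ℕ} (n m : ℕ) (ν : Measure (Torus d)) (t : ℕ) : ℕ :=
  ⌊(n:ℝ) * Fc m ν t⌋₊

lemma Gc_zero {d : ℕ} (n m : ℕ) (ν : Measure (Torus d)) : Gc n m ν 0 = 0 := by
  simp [Gc, Fc_zero]

lemma Gc_mono {d : ℕ} (n m : ℕ) (ν : Measure (Torus d)) [IsFiniteMeasure ν] :
    Monotone (Gc n m ν) := fun s t hst =>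
  Nat.floor_mono (mul_le_mul_of_nonneg_left (Fc_mono ν hst) (Nat.cast_nonneg n))

lemma Gc_top {d : ℕ} (n m : ℕ) (ν : Measure (Torus d)) [IsProbabilityMeasure ν]
    (hm : 0 < m) {t : ℕ} (ht : m ^ d ≤ t) : Gc n m ν t = n := by
  rw [Gc, Fc_one ν hm ht, mul_one, Nat.floor_natCast]

lemma Gc_le {d : ℕ} (n m : ℕ) (ν : Measure (Torus d)) (t : ℕ) :
    (Gc n m ν t : ℝ) ≤ (n:ℝ) * Fc m ν t :=
  Nat.floor_le (mul_nonneg (Nat.cast_nonneg n) (Fc_nonneg ν t))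

lemma Gc_gt {d : ℕ} (n m : ℕ) (ν : Measure (Torus d)) (t : ℕ) :
    (n:ℝ) * Fc m ν t - 1 < (Gc n m ν t : ℝ) :=
  Nat.sub_one_lt_floor _

lemma card_fiber (n a b : ℕ) (hbn : b ≤ n) :
    (Finset.univ.filter fun i : Fin n => a ≤ (i:ℕ) ∧ (i:ℕ) < b).card = b - a := by
  have hmap : (Finset.univ.filter fun i : Fin n => a ≤ (i:ℕ) ∧ (i:ℕ) < b).map
      Fin.valEmbedding = Finset.Ico a b := by
    ext j
    simp only [Finset.mem_map, Finset.mem_filter, Finset.mem_univ, true_and,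
      Fin.valEmbedding_apply, Finset.mem_Ico]
    constructor
    · rintro ⟨i, hi, rfl⟩; exact hi
    · intro hj; exact ⟨⟨j, lt_of_lt_of_le hj.2 hbn⟩, hj, rfl⟩
  rw [← Nat.card_Ico a b, ← hmap, Finset.card_map]

lemma integrable_shift {d : ℕ} {h : Torus d → ℝ} (hcont : Continuous h) (x : Torus d)
    (μ : Measure (Torus d)) [IsFiniteMeasure μ] : Integrable (fun y => h (x - y)) μ := by
  have hc : Continuous fun y : Torus d => h (x - y) :=
    hcont.comp (continuous_const.sub continuous_id)
  exact hc.integrable_of_hasCompactSupport ((isClosed_tsupport _).isCompact)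

lemma npoint_prob {d n : ℕ} (hn : n ≠ 0) (p : Fin n → Torus d) :
    IsProbabilityMeasure ((n : ℝ≥0∞)⁻¹ • ∑ i, Measure.dirac (p i)) := by
  constructor
  rw [Measure.smul_apply, smul_eq_mul]
  have : (∑ i, Measure.dirac (p i) : Measure (Torus d)) Set.univ = n := by
    rw [Measure.coe_finset_sum]
    simp
  rw [this, ENNReal.inv_mul_cancel (by exact_mod_cast hn) (by simp)]

lemma integral_npoint {d n : ℕ} {h : Torus d → ℝ} (hcont : Continuous h)
    (p : Fin n → Torus d) (x : Torus d) :
    ∫ y, h (x - y) ∂((n : ℝ≥0∞)⁻¹ • ∑ i, Measure.dirac (p i))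
      = (n:ℝ)⁻¹ * ∑ i, h (x - p i) := by
  have hc : Continuous fun y : Torus d => h (x - y) :=
    hcont.comp (continuous_const.sub continuous_id)
  rw [integral_smul_measure, integral_finset_sum_measure (fun i _ => integrable_shift hcont x _)]
  simp only [integral_dirac' _ _ hc.stronglyMeasurable]
  simp [ENNReal.toReal_inv]

lemma conv_dist_le {d : ℕ} {L : ℝ≥0} {h : Torus d → ℝ} (hcont : Continuous h)
    (hLip : LipschitzWith L h) (μ : Measure (Torus d)) [IsFiniteMeasure μ] (x x' : Torus d) :
    dist (∫ y, h (x - y) ∂μ) (∫ y, h (x' - y) ∂μ)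
      ≤ (L : ℝ) * dist x x' * (μ Set.univ).toReal := by
  rw [Real.dist_eq, ← integral_sub (integrable_shift hcont x μ) (integrable_shift hcont x' μ)]
  have hb : ∀ y : Torus d, ‖h (x - y) - h (x' - y)‖ ≤ (L : ℝ) * dist x x' := by
    intro y
    rw [Real.norm_eq_abs, ← Real.dist_eq]
    calc dist (h (x - y)) (h (x' - y)) ≤ (L : ℝ) * dist (x - y) (x' - y) := hLip.dist_le_mul _ _
      _ = (L : ℝ) * dist x x' := by rw [dist_sub_right]
  exact (norm_integral_le_of_norm_le_const (Filter.Eventually.of_forall hb))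

lemma conv_continuous {d : ℕ} {L : ℝ≥0} {h : Torus d → ℝ} (hcont : Continuous h)
    (hLip : LipschitzWith L h) (μ : Measure (Torus d)) [IsFiniteMeasure μ] :
    Continuous (fun x => ∫ y, h (x - y) ∂μ) := by
  refine LipschitzWith.continuous (K := L * (μ Set.univ).toNNReal)
    (LipschitzWith.of_dist_le_mul fun x x' => ?_)
  calc dist (∫ y, h (x - y) ∂μ) (∫ y, h (x' - y) ∂μ)
      ≤ (L : ℝ) * dist x x' * (μ Set.univ).toReal := conv_dist_le hcont hLip μ x x'
    _ = ((L * (μ Set.univ).toNNReal : ℝ≥0) : ℝ) * dist x x' := by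
        rw [NNReal.coe_mul, show ((μ Set.univ).toNNReal : ℝ) = (μ Set.univ).toReal from rfl]
        ring

lemma Fc_le_one {d m : ℕ} (ν : Measure (Torus d)) [IsProbabilityMeasure ν] (t : ℕ) :
    Fc m ν t ≤ 1 := by
  have := prob_le_one (μ := ν) (s := {y : Torus d | idx m y < t})
  calc Fc m ν t ≤ (1 : ℝ≥0∞).toReal := ENNReal.toReal_mono (by simp) this
    _ = 1 := by simp

lemma Gc_le_n {d m n : ℕ} (ν : Measure (Torus d)) [IsProbabilityMeasure ν] (t : ℕ) :
    Gc n m ν t ≤ n := by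
  have h1 : (n:ℝ) * Fc m ν t ≤ (n:ℝ) :=
    le_trans (mul_le_mul_of_nonneg_left (Fc_le_one ν t) (Nat.cast_nonneg n)) (by simp)
  calc Gc n m ν t ≤ ⌊(n:ℝ)⌋₊ := Nat.floor_mono h1
    _ = n := Nat.floor_natCast n

lemma pointwise_bound {d n m : ℕ} {L : ℝ≥0} {h : Torus d → ℝ} (hcont : Continuous h)
    (hLip : LipschitzWith L h) (hm : 0 < m) (hn : 0 < n) (hMn : m ^ d ≤ n)
    (ν : Measure (Torus d)) [IsProbabilityMeasure ν] :
    ∃ p : Fin n → Torus d, ∀ x : Torus d,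
      |convDiff h ((n : ℝ≥0∞)⁻¹ • ∑ i, Measure.dirac (p i)) ν x| ≤ (L : ℝ) * (3 / (2 * m)) := by
  classical
  set M := m ^ d with hM
  have hM1 : 1 ≤ M := Nat.one_le_pow _ _ hm
  have hex : ∀ i : Fin n, ∃ t, (i:ℕ) < Gc n m ν (t+1) := fun i =>
    ⟨M, by rw [Gc_top n m ν hm (Nat.le_succ M)]; exact i.isLt⟩
  refine ⟨fun i => cen m (Nat.find (hex i)), fun x => ?_⟩
  have hm' : (0:ℝ) < m := Nat.cast_pos.2 hm
  have hn' : (0:ℝ) < n := Nat.cast_pos.2 hn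
  have hP_lt : ∀ i : Fin n, Nat.find (hex i) < M := by
    intro i
    have hle : Nat.find (hex i) ≤ M - 1 := Nat.find_le (by
      have hMe : M - 1 + 1 = M := by omega
      rw [hMe, Gc_top n m ν hm le_rfl]
      exact i.isLt)
    omega
  have hP_eq : ∀ (i : Fin n) (t : ℕ),
      Nat.find (hex i) = t ↔ (Gc n m ν t ≤ (i:ℕ) ∧ (i:ℕ) < Gc n m ν (t+1)) := by
    intro i t
    rw [Nat.find_eq_iff]
    constructor
    · rintro ⟨h1, h2⟩
      refine ⟨?_, h1⟩
      rcases Nat.eq_zero_or_pos t with rfl | ht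
      · rw [Gc_zero]
        exact Nat.zero_le _
      · have h3 := h2 (t-1) (by omega)
        have ht1 : t - 1 + 1 = t := by omega
        rw [ht1] at h3
        omega
    · rintro ⟨h1, h2⟩
      exact ⟨h2, fun s hs => not_lt.2
        (le_trans (Gc_mono n m ν (by omega : s + 1 ≤ t)) h1)⟩
  -- fiberwise sum
  have hsum : ∑ i : Fin n, h (x - cen m (Nat.find (hex i)))
      = ∑ t ∈ Finset.range M, ((Gc n m ν (t+1) - Gc n m ν t : ℕ) : ℝ) * h (x - cen m t) := by
    rw [← Finset.sum_fiberwise_of_maps_to (g := fun i : Fin n => Nat.find (hex i))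
      (fun i _ => Finset.mem_range.2 (hP_lt i)) (fun i => h (x - cen m (Nat.find (hex i))))]
    refine Finset.sum_congr rfl fun t _ => ?_
    have hcg : ∀ i ∈ Finset.univ.filter (fun i : Fin n => Nat.find (hex i) = t),
        h (x - cen m (Nat.find (hex i))) = h (x - cen m t) := fun i hi => by
      rw [(Finset.mem_filter.1 hi).2]
    rw [Finset.sum_congr rfl hcg, Finset.sum_const, nsmul_eq_mul]
    congr 1
    have hfe : (Finset.univ.filter (fun i : Fin n => Nat.find (hex i) = t))
        = (Finset.univ.filter fun i : Fin n => Gc n m ν t ≤ (i:ℕ) ∧ (i:ℕ) < Gc n m ν (t+1)) := by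
      apply Finset.filter_congr
      intro i _
      exact hP_eq i t
    rw [hfe, card_fiber _ _ _ (Gc_le_n ν (t+1))]
  -- integral identities
  have hI1 : ∫ y, h (x - y) ∂((n : ℝ≥0∞)⁻¹ • ∑ i : Fin n, Measure.dirac (cen m (Nat.find (hex i))))
      = (n:ℝ)⁻¹ * ∑ i : Fin n, h (x - cen m (Nat.find (hex i))) :=
    integral_npoint hcont _ x
  have hI2 : ∫ y, h (x - cen m (idx m y)) ∂ν
      = ∑ t ∈ Finset.range M, (Fc m ν (t+1) - Fc m ν t) * h (x - cen m t) :=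
    integral_comp_idx ν hm (fun t => h (x - cen m t))
  have hI3 : |∫ y, h (x - cen m (idx m y)) ∂ν - ∫ y, h (x - y) ∂ν| ≤ (L:ℝ) / (2 * m) := by
    rw [← integral_sub (integrable_comp_idx ν hm (fun t => h (x - cen m t)))
      (integrable_shift hcont x ν)]
    have hb : ∀ y : Torus d, ‖h (x - cen m (idx m y)) - h (x - y)‖ ≤ (L:ℝ) / (2*m) := by
      intro y
      rw [Real.norm_eq_abs, ← Real.dist_eq]
      calc dist (h (x - cen m (idx m y))) (h (x - y))
          ≤ (L:ℝ) * dist (x - cen m (idx m y)) (x - y) := hLip.dist_le_mul _ _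
        _ = (L:ℝ) * dist (cen m (idx m y)) y := by rw [dist_sub_left]
        _ ≤ (L:ℝ) * (1/(2*m)) := mul_le_mul_of_nonneg_left
            (by rw [dist_comm]; exact dist_cen_idx hm y) L.coe_nonneg
        _ = (L:ℝ)/(2*m) := by ring
    have hni := norm_integral_le_of_norm_le_const (μ := ν) (Filter.Eventually.of_forall hb)
    rw [probReal_univ, mul_one, Real.norm_eq_abs] at hni
    exact hni
  -- Abel summation part
  have hb_step : ∀ t : ℕ, |h (x - cen m (t+1)) - h (x - cen m t)| ≤ (L:ℝ) * (1/m) := by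
    intro t
    rw [← Real.dist_eq]
    calc dist (h (x - cen m (t+1))) (h (x - cen m t))
        ≤ (L:ℝ) * dist (x - cen m (t+1)) (x - cen m t) := hLip.dist_le_mul _ _
      _ = (L:ℝ) * dist (cen m (t+1)) (cen m t) := by rw [dist_sub_left]
      _ ≤ (L:ℝ) * (1/m) := mul_le_mul_of_nonneg_left
          (by rw [dist_comm]; exact dist_cen_succ hm t) L.coe_nonneg
  set Sv : ℕ → ℝ := fun t => Fc m ν t - (Gc n m ν t : ℝ)/n with hSv
  have hS0 : Sv 0 = 0 := by simp [hSv, Fc_zero, Gc_zero]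
  have hSM : Sv M = 0 := by
    rw [hSv]
    simp only [Fc_one (t := M) ν hm hM.ge, Gc_top (t := M) n m ν hm hM.ge]
    field_simp
    norm_num
  have hSle : ∀ t, |Sv t| ≤ 1/n := by
    intro t
    have h1 := Gc_le n m ν t
    have h2 := Gc_gt n m ν t
    rw [hSv, abs_le]
    constructor
    · have h3 : (Gc n m ν t : ℝ)/n ≤ Fc m ν t := by
        rw [div_le_iff₀ hn']
        nlinarith
      have h4 : (0:ℝ) < 1/n := by positivity
      simp only
      linarith
    · have h3 : Fc m ν t ≤ (Gc n m ν t : ℝ)/n + 1/n := by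
        rw [← add_div, le_div_iff₀ hn']
        nlinarith
      simp only
      linarith
  have hsum2 : (n:ℝ)⁻¹ * ∑ i : Fin n, h (x - cen m (Nat.find (hex i)))
      = ∑ t ∈ Finset.range M, ((Gc n m ν (t+1) - Gc n m ν t : ℕ) : ℝ)/n * h (x - cen m t) := by
    rw [hsum, Finset.mul_sum]
    exact Finset.sum_congr rfl fun t _ => by ring
  have habel : |∑ t ∈ Finset.range M, (Fc m ν (t+1) - Fc m ν t) * h (x - cen m t)
      - ∑ t ∈ Finset.range M,
          ((Gc n m ν (t+1) - Gc n m ν t : ℕ) : ℝ)/n * h (x - cen m t)| ≤ (L:ℝ) / m := by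
    rw [← Finset.sum_sub_distrib]
    have hterm : ∀ t ∈ Finset.range M,
        (Fc m ν (t+1) - Fc m ν t) * h (x - cen m t)
          - ((Gc n m ν (t+1) - Gc n m ν t : ℕ) : ℝ)/n * h (x - cen m t)
        = (Sv (t+1) - Sv t) * h (x - cen m t) := by
      intro t _
      have hc : ((Gc n m ν (t+1) - Gc n m ν t : ℕ) : ℝ) = (Gc n m ν (t+1):ℝ) - Gc n m ν t := by
        rw [Nat.cast_sub (Gc_mono n m ν (Nat.le_succ t))]
      rw [hc, hSv]
      field_simp
      ring
    rw [Finset.sum_congr rfl hterm, abel_sum Sv (fun t => h (x - cen m t)) M, hS0, hSM]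
    simp only [zero_mul, sub_zero, zero_sub, abs_neg]
    calc |∑ t ∈ Finset.range M, Sv (t+1) * (h (x - cen m (t+1)) - h (x - cen m t))|
        ≤ ∑ t ∈ Finset.range M, |Sv (t+1) * (h (x - cen m (t+1)) - h (x - cen m t))| :=
          Finset.abs_sum_le_sum_abs _ _
      _ ≤ ∑ _t ∈ Finset.range M, (1/(n:ℝ)) * ((L:ℝ) * (1/m)) := Finset.sum_le_sum fun t _ => by
          rw [abs_mul]
          exact mul_le_mul (hSle (t+1)) (hb_step t) (abs_nonneg _) (by positivity)
      _ = (M:ℝ) * ((1/(n:ℝ)) * ((L:ℝ) * (1/m))) := by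
          rw [Finset.sum_const, Finset.card_range, nsmul_eq_mul]
      _ = ((M:ℝ)/n) * ((L:ℝ)/m) := by ring
      _ ≤ 1 * ((L:ℝ)/m) := by
          refine mul_le_mul_of_nonneg_right ?_ (by positivity)
          rw [div_le_one hn']
          exact_mod_cast hMn
      _ = (L:ℝ)/m := one_mul _
  have e1 : convDiff h ((n : ℝ≥0∞)⁻¹ • ∑ i : Fin n, Measure.dirac (cen m (Nat.find (hex i)))) ν x
      = (∑ t ∈ Finset.range M, ((Gc n m ν (t+1) - Gc n m ν t : ℕ) : ℝ)/n * h (x - cen m t)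
          - ∑ t ∈ Finset.range M, (Fc m ν (t+1) - Fc m ν t) * h (x - cen m t))
        + (∫ y, h (x - cen m (idx m y)) ∂ν - ∫ y, h (x - y) ∂ν) := by
    rw [convDiff, hI1, hsum2, hI2]
    ring
  rw [e1]
  calc |_ + _| ≤ |∑ t ∈ Finset.range M, ((Gc n m ν (t+1) - Gc n m ν t : ℕ) : ℝ)/n * h (x - cen m t)
          - ∑ t ∈ Finset.range M, (Fc m ν (t+1) - Fc m ν t) * h (x - cen m t)|
        + |∫ y, h (x - cen m (idx m y)) ∂ν - ∫ y, h (x - y) ∂ν| := abs_add_le _ _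
    _ ≤ (L:ℝ)/m + (L:ℝ)/(2*m) := add_le_add (by rw [abs_sub_comm]; exact habel) hI3
    _ = (L:ℝ) * (3/(2*m)) := by field_simp; ring

lemma key_approx {d : ℕ} (n : ℕ) (L : ℝ≥0) (h : Torus d → ℝ) (hcont : Continuous h)
    (hLip : LipschitzWith L h) (hn : 2 ^ d ≤ n) (ν : Measure (Torus d))
    [hνp : IsProbabilityMeasure ν] :
    ∃ μ ∈ nPointMeasures d n, IsProbabilityMeasure μ ∧
      nhDist h μ ν ≤ (Real.sqrt d / 2 + 1) * (L : ℝ) / ((n : ℝ) ^ ((1 : ℝ) / d) - 1) := by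
  have hn0 : 0 < n := lt_of_lt_of_le (pow_pos (by norm_num : 0 < 2) d) hn
  have hn0' : n ≠ 0 := hn0.ne'
  rcases Nat.eq_zero_or_pos d with rfl | hd
  · -- d = 0 : the torus is a single point
    refine ⟨(n : ℝ≥0∞)⁻¹ • ∑ _i : Fin n, Measure.dirac (default : Torus 0),
      ⟨fun _ => default, rfl⟩, npoint_prob hn0' _, ?_⟩
    haveI := npoint_prob hn0' (fun _ : Fin n => (default : Torus 0))
    have hzero : ∀ (μ : Measure (Torus 0)) [IsProbabilityMeasure μ] (x : Torus 0),
        ∫ y, h (x - y) ∂μ = h 0 := by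
      intro μ _ x
      have : (fun y : Torus 0 => h (x - y)) = fun _ => h 0 := by
        funext y
        congr 1
        exact Subsingleton.elim _ _
      rw [this, integral_const, probReal_univ, one_smul]
    have hconv : ∀ x : Torus 0,
        convDiff h ((n : ℝ≥0∞)⁻¹ • ∑ _i : Fin n, Measure.dirac (default : Torus 0)) ν x = 0 := by
      intro x
      rw [convDiff, hzero, hzero, sub_self]
    have hnh : nhDist h ((n : ℝ≥0∞)⁻¹ • ∑ _i : Fin n, Measure.dirac (default : Torus 0)) ν
        = 0 := by
      rw [nhDist]
      have : (fun x : Torus 0 =>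
          (convDiff h ((n : ℝ≥0∞)⁻¹ • ∑ _i : Fin n, Measure.dirac (default : Torus 0)) ν x) ^ 2)
          = fun _ => (0:ℝ) := by
        funext x
        rw [hconv x]
        norm_num
      rw [this, integral_zero, Real.sqrt_zero]
    rw [hnh]
    have : ((n : ℝ) ^ ((1 : ℝ) / (0:ℕ)) - 1) = 0 := by
      norm_num
    rw [this, div_zero]
  · -- main case d ≥ 1
    set nd : ℝ := (n : ℝ) ^ ((1 : ℝ) / d) with hnd
    have hd' : (0:ℝ) < d := Nat.cast_pos.2 hd
    have hn2 : (2:ℝ) ≤ nd := by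
      have h1 : ((2:ℝ) ^ (d:ℕ)) ^ ((1:ℝ)/d) ≤ (n:ℝ) ^ ((1:ℝ)/d) :=
        Real.rpow_le_rpow (by positivity) (by exact_mod_cast hn) (by positivity)
      have h2 : ((2:ℝ) ^ (d:ℕ)) ^ ((1:ℝ)/d) = 2 := by
        rw [← Real.rpow_natCast 2 d, ← Real.rpow_mul (by norm_num : (0:ℝ) ≤ 2)]
        rw [mul_one_div, div_self hd'.ne', Real.rpow_one]
      rw [← h2]
      exact h1
    set m : ℕ := ⌊nd⌋₊ with hmdef
    have hm2 : 2 ≤ m := Nat.le_floor (by exact_mod_cast hn2)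
    have hm : 0 < m := by omega
    have hm' : (0:ℝ) < m := Nat.cast_pos.2 hm
    have hub : (m:ℝ) ≤ nd := Nat.floor_le (Real.rpow_nonneg (Nat.cast_nonneg n) _)
    have hMn : m ^ d ≤ n := by
      have h1 : ((m:ℝ)) ^ (d:ℕ) ≤ nd ^ (d:ℕ) := pow_le_pow_left₀ hm'.le hub d
      have h2 : nd ^ (d:ℕ) = (n:ℝ) := by
        rw [hnd, ← Real.rpow_natCast ((n:ℝ) ^ ((1:ℝ)/d)) d, ← Real.rpow_mul (Nat.cast_nonneg n)]
        rw [one_div, inv_mul_cancel₀ hd'.ne', Real.rpow_one]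
      rw [h2] at h1
      exact_mod_cast h1
    have hlb : nd - 1 ≤ (m:ℝ) := (Nat.sub_one_lt_floor nd).le
    have hdenpos : (0:ℝ) < nd - 1 := by linarith
    obtain ⟨p, hp⟩ := pointwise_bound hcont hLip hm hn0 hMn ν
    haveI hμp : IsProbabilityMeasure ((n : ℝ≥0∞)⁻¹ • ∑ i, Measure.dirac (p i)) :=
      npoint_prob hn0' p
    refine ⟨(n : ℝ≥0∞)⁻¹ • ∑ i, Measure.dirac (p i), ⟨p, rfl⟩, hμp, ?_⟩
    set μp := (n : ℝ≥0∞)⁻¹ • ∑ i, Measure.dirac (p i) with hμpdef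
    set B := (L:ℝ) * (3/(2*m)) with hB
    have hBnn : 0 ≤ B := by positivity
    have hcd : Continuous (convDiff h μp ν) := by
      have h1 := conv_continuous hcont hLip μp
      have h2 := conv_continuous hcont hLip ν
      exact h1.sub h2
    have hnh : nhDist h μp ν ≤ B := by
      have hint : Integrable (fun x => (convDiff h μp ν x)^2) volume := by
        refine (integrable_const (B^2)).mono' ((hcd.pow 2).aestronglyMeasurable) ?_
        refine Filter.Eventually.of_forall fun x => ?_
        rw [Real.norm_eq_abs, abs_of_nonneg (sq_nonneg _)]
        have h1 := hp x
        nlinarith [abs_nonneg (convDiff h μp ν x), le_abs_self (convDiff h μp ν x),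
          neg_abs_le (convDiff h μp ν x)]
      have hle : ∫ x, (convDiff h μp ν x)^2 ≤ B^2 := by
        have h1 : ∫ x, (convDiff h μp ν x)^2 ≤ ∫ _x : Torus d, B^2 := by
          refine integral_mono hint (integrable_const _) fun x => ?_
          have h2 := hp x
          nlinarith [le_abs_self (convDiff h μp ν x), neg_abs_le (convDiff h μp ν x)]
        rwa [integral_const, probReal_univ, one_smul] at h1
      calc nhDist h μp ν ≤ Real.sqrt (B^2) := Real.sqrt_le_sqrt hle
        _ = B := Real.sqrt_sq hBnn
    refine le_trans hnh ?_
    have hsd : (1:ℝ) ≤ Real.sqrt d := by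
      rw [show (1:ℝ) = Real.sqrt 1 from (Real.sqrt_one).symm]
      exact Real.sqrt_le_sqrt (by exact_mod_cast hd)
    have hLm : (L:ℝ)/m ≤ (L:ℝ)/(nd - 1) :=
      div_le_div_of_nonneg_left L.coe_nonneg hdenpos hlb
    calc B = (3/2) * ((L:ℝ)/m) := by rw [hB]; ring
      _ ≤ (3/2) * ((L:ℝ)/(nd-1)) := mul_le_mul_of_nonneg_left hLm (by norm_num)
      _ ≤ (Real.sqrt d / 2 + 1) * ((L:ℝ)/(nd-1)) :=
          mul_le_mul_of_nonneg_right (by linarith) (div_nonneg L.coe_nonneg hdenpos.le)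
      _ = (Real.sqrt d / 2 + 1) * (L:ℝ) / (nd-1) := (mul_div_assoc _ _ _).symm


/-- For `L`-Lipschitz `h` with nonvanishing Fourier coefficients, a
nonempty set `𝓜_N` of probability measures, `n ≥ 2^d` and
`ε = (√d/2 + 1)L/(n^{1/d} − 1)`, the approximation set
`𝓐_n^ε = 𝓜(Ω^n) ∩ 𝓜_N^ε` (with `𝓜_N^ε` the `ε`-enlargement of `𝓜_N` in `N_h`) is
nonempty and satisfies `𝓗_{N_h}(𝓐_n^ε, 𝓜_N) ≤ ε`. -/
theorem approximation_set_nonempty_and_hausdorff_bound {d : ℕ} (n : ℕ) (L : ℝ≥0)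
    (h : Torus d → ℝ) (hcont : Continuous h) (hLip : LipschitzWith L h)
    (hfc : ∀ ξ : Fin d → ℤ, torusFourierCoeff h ξ ≠ 0)
    (𝓜 : Set (Measure (Torus d))) (h𝓜prob : ∀ μ ∈ 𝓜, IsProbabilityMeasure μ)
    (h𝓜ne : 𝓜.Nonempty) (hn : 2 ^ d ≤ n) :
    (nPointMeasures d n ∩
        { μ | IsProbabilityMeasure μ ∧ ∃ ν ∈ 𝓜, nhDist h μ ν ≤
            (Real.sqrt d / 2 + 1) * (L : ℝ) / ((n : ℝ) ^ ((1 : ℝ) / d) - 1) }).Nonempty ∧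
      hausNh h
        (nPointMeasures d n ∩
          { μ | IsProbabilityMeasure μ ∧ ∃ ν ∈ 𝓜, nhDist h μ ν ≤
              (Real.sqrt d / 2 + 1) * (L : ℝ) / ((n : ℝ) ^ ((1 : ℝ) / d) - 1) }) 𝓜 ≤
        (Real.sqrt d / 2 + 1) * (L : ℝ) / ((n : ℝ) ^ ((1 : ℝ) / d) - 1) := by
  obtain ⟨ν₀, hν₀⟩ := h𝓜ne
  haveI := h𝓜prob ν₀ hν₀
  obtain ⟨μ₀, hμ₀mem, hμ₀prob, hμ₀le⟩ := key_approx n L h hcont hLip hn ν₀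
  have hεnn : 0 ≤ (Real.sqrt d / 2 + 1) * (L : ℝ) / ((n : ℝ) ^ ((1 : ℝ) / d) - 1) :=
    le_trans (Real.sqrt_nonneg _) hμ₀le
  constructor
  · exact ⟨μ₀, hμ₀mem, hμ₀prob, ν₀, hν₀, hμ₀le⟩
  · rw [hausNh]
    apply max_le
    · apply Real.sSup_le _ hεnn
      rintro r ⟨μ, hμA, rfl⟩
      obtain ⟨_, _, ν, hν, hle⟩ := hμA
      refine csInf_le_of_le ⟨0, ?_⟩ ⟨ν, hν, rfl⟩ hle
      rintro r ⟨ν', _, rfl⟩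
      exact Real.sqrt_nonneg _
    · apply Real.sSup_le _ hεnn
      rintro r ⟨ν, hν, rfl⟩
      haveI := h𝓜prob ν hν
      obtain ⟨μ, hμmem, hμprob, hle⟩ := key_approx n L h hcont hLip hn ν
      refine csInf_le_of_le ⟨0, ?_⟩ ⟨μ, ⟨hμmem, hμprob, ν, hν, hle⟩, rfl⟩ hle
      rintro r ⟨μ', _, rfl⟩
      exact Real.sqrt_nonneg _
end
end
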